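/- arXiv:2511.11254 — 7 statements merged into one kernel-verified Lean document; each statement's English description precedes it below -/
import Mathlib

section
/- Let G be a finite group, F a group, (F, G, ◁, ▷) a matched pair with u ▷ v = v for all u ∈ G, v ∈ F, and σ, τ trivial, and suppose the Hopf algebra H = k^G # kF admits a coquasitriangular structure. Let V = span{v} be a 1-dimensional right k^G-comodule with coaction ρ(v) = v ⊗ Σ_{g∈G} a^g p_g, where a^g ∈ k. Then a^g = a^{g◁f} for all g ∈ G and f ∈ F. -/
/-- A matched pair of groups `(F, G, ◁, ▷)`: `rtr g f = g ▷ f` is an action of the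
group `G` on the set `F`, and `ltl g f = g ◁ f` is an action of the group `F` on the
set `G`, satisfying the matched pair compatibility conditions. -/
structure MatchedPair (F G : Type*) [Group F] [Group G] where
  rtr : G → F → F
  ltl : G → F → G
  one_rtr : ∀ f, rtr 1 f = f
  mul_rtr : ∀ g g' f, rtr (g * g') f = rtr g (rtr g' f)
  ltl_one : ∀ g, ltl g 1 = g
  ltl_mul : ∀ g f f', ltl g (f * f') = ltl (ltl g f) f'
  rtr_mul : ∀ g f f', rtr g (f * f') = rtr g f * rtr (ltl g f) f'
  mul_ltl : ∀ g g' f, ltl (g * g') f = ltl g (rtr g' f) * ltl g' f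

/-- Cocycle data `(σ, τ)` for the abelian extension `k^G τ#_σ kF`. -/
structure CocycleData (k F G : Type*) [Field k] [Group F] [Group G]
    (mp : MatchedPair F G) where
  sig : G → F → F → kˣ
  tau : G → G → F → kˣ
  sig_one_left : ∀ g f, sig g 1 f = 1
  sig_one_right : ∀ g f, sig g f 1 = 1
  one_sig : ∀ f f', sig 1 f f' = 1
  sig_cocycle : ∀ g f f' f'',
    sig (mp.ltl g f) f' f'' * sig g f (f' * f'') = sig g f f' * sig g (f * f') f''
  one_tau : ∀ g f, tau 1 g f = 1
  tau_one : ∀ g f, tau g 1 f = 1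
  tau_one_right : ∀ g g', tau g g' 1 = 1
  tau_cocycle : ∀ g g' g'' f,
    tau g g' (mp.rtr g'' f) * tau (g * g') g'' f = tau g (g' * g'') f * tau g' g'' f
  compat : ∀ g g' f f',
    sig (g * g') f f' * tau g g' (f * f')
      = sig g (mp.rtr g' f) (mp.rtr (mp.ltl g' f) f') * sig g' f f' * tau g g' f
        * tau (mp.ltl g (mp.rtr g' f)) (mp.ltl g' f) f'

/-- The product `(p_g # f)(p_{g'} # f') = δ_{g ◁ f, g'} σ(g; f, f') p_g # (f f')` of two
basis elements of `H = k^G τ#_σ kF`, as an element of `H` (realized as `(G × F) →₀ k`). -/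
noncomputable def mulB {k F G : Type*} [Field k] [Group F] [Group G] [DecidableEq G]
    (mp : MatchedPair F G) (cd : CocycleData k F G mp) (i j : G × F) : (G × F) →₀ k :=
  if mp.ltl i.1 i.2 = j.1 then
    Finsupp.single (i.1, i.2 * j.2) ((cd.sig i.1 i.2 j.2 : kˣ) : k)
  else 0

/-- `R` (given by its values `R g f h f' = R(p_g # f, p_h # f')` on the basis
`{p_g # f}` of `H = k^G τ#_σ kF`) is a coquasitriangular structure on `H`:
it is convolution invertible, satisfies `R(a, bc) = Σ R(a₁, c) R(a₂, b)` and
`R(ab, c) = Σ R(a, c₁) R(b, c₂)`, and the quasi-commutativity axiom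
`Σ R(a₁, b₁) a₂ b₂ = Σ b₁ a₁ R(a₂, b₂)`, all expressed on basis elements using
`Δ(p_g # f) = Σ_x τ(g x⁻¹, x; f) (p_{g x⁻¹} # (x ▷ f)) ⊗ (p_x # f)` and
`ε(p_g # f) = δ_{g,1}`. -/
structure IsCQT {k F G : Type*} [Field k] [Group F] [Group G] [Fintype G] [DecidableEq G]
    (mp : MatchedPair F G) (cd : CocycleData k F G mp)
    (R : G → F → G → F → k) : Prop where
  conv_inv : ∃ R' : G → F → G → F → k,
    (∀ (g h : G) (f f' : F),
      ∑ x : G, ∑ y : G,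
        ((cd.tau (g * x⁻¹) x f : kˣ) : k) * ((cd.tau (h * y⁻¹) y f' : kˣ) : k) *
          R (g * x⁻¹) (mp.rtr x f) (h * y⁻¹) (mp.rtr y f') * R' x f y f'
        = (if g = 1 then (1 : k) else 0) * (if h = 1 then (1 : k) else 0)) ∧
    (∀ (g h : G) (f f' : F),
      ∑ x : G, ∑ y : G,
        ((cd.tau (g * x⁻¹) x f : kˣ) : k) * ((cd.tau (h * y⁻¹) y f' : kˣ) : k) *
          R' (g * x⁻¹) (mp.rtr x f) (h * y⁻¹) (mp.rtr y f') * R x f y f'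
        = (if g = 1 then (1 : k) else 0) * (if h = 1 then (1 : k) else 0))
  cqt1 : ∀ (g h l : G) (f f' f'' : F),
    (if mp.ltl h f' = l then (1 : k) else 0) * ((cd.sig h f' f'' : kˣ) : k)
        * R g f h (f' * f'')
      = ∑ x : G, ((cd.tau (g * x⁻¹) x f : kˣ) : k)
          * R (g * x⁻¹) (mp.rtr x f) l f'' * R x f h f'
  cqt2 : ∀ (g h l : G) (f f' f'' : F),
    (if mp.ltl g f = h then (1 : k) else 0) * ((cd.sig g f f' : kˣ) : k)
        * R g (f * f') l f''
      = ∑ x : G, ((cd.tau (l * x⁻¹) x f'' : kˣ) : k)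
          * R g f (l * x⁻¹) (mp.rtr x f'') * R h f' x f''
  qcomm : ∀ (g h : G) (f f' : F),
    (∑ x : G, ∑ y : G,
      (((cd.tau (g * x⁻¹) x f : kˣ) : k) * ((cd.tau (h * y⁻¹) y f' : kˣ) : k) *
        R (g * x⁻¹) (mp.rtr x f) (h * y⁻¹) (mp.rtr y f')) • mulB mp cd (x, f) (y, f'))
      = ∑ x : G, ∑ y : G,
        (((cd.tau (g * x⁻¹) x f : kˣ) : k) * ((cd.tau (h * y⁻¹) y f' : kˣ) : k) *
          R x f y f') • mulB mp cd (h * y⁻¹, mp.rtr y f') (g * x⁻¹, mp.rtr x f)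

/-- Suppose `u ▷ v = v` for all `u ∈ G`, `v ∈ F`, `σ` and `τ` are trivial, and
`H = k^G # kF` admits a coquasitriangular structure. If `V = span{v}` is a
1-dimensional right `k^G`-comodule with coaction `ρ(v) = v ⊗ Σ_g a^g p_g` (the
comodule axioms amount to `a 1 = 1` and `a (u w) = a u * a w`), then
`a^g = a^{g ◁ f}` for all `g ∈ G`, `f ∈ F`. -/
theorem coeff_ltl_invariant_of_cqt {k F G : Type*} [Field k] [IsAlgClosed k]
    [CharZero k] [Group F] [Group G] [Fintype G] [DecidableEq G]
    (mp : MatchedPair F G) (cd : CocycleData k F G mp)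
    (hrtr : ∀ (u : G) (v : F), mp.rtr u v = v)
    (hsig : ∀ (g : G) (f f' : F), cd.sig g f f' = 1)
    (htau : ∀ (g g' : G) (f : F), cd.tau g g' f = 1)
    (hR : ∃ R : G → F → G → F → k, IsCQT mp cd R)
    (a : G → k) (ha1 : a 1 = 1) (hamul : ∀ u w : G, a (u * w) = a u * a w) :
    ∀ (g : G) (f : F), a g = a (mp.ltl g f) := by
  classical
  obtain ⟨R, hcqt⟩ := hR
  obtain ⟨R', hinv1, -⟩ := hcqt.conv_inv
  have hainv : ∀ u : G, a u * a u⁻¹ = 1 := fun u => by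
    rw [← hamul, mul_inv_cancel, ha1]
  have hane : ∀ u : G, a u ≠ 0 := fun u h0 => by simpa [h0] using hainv u
  -- shift lemmas
  have shiftR : ∀ (φ : G → k) (x : G),
      (∑ g : G, a g * φ (g * x⁻¹)) = a x * ∑ g : G, a g * φ g := by
    intro φ x
    rw [Finset.mul_sum]
    refine Fintype.sum_equiv (Equiv.mulRight x⁻¹) _ _ (fun g => ?_)
    simp only [Equiv.coe_mulRight]
    rw [← mul_assoc, mul_comm (a x), ← hamul, inv_mul_cancel_right]
  have shiftL : ∀ (φ : G → k) (x : G),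
      (∑ g : G, a g * φ (x⁻¹ * g)) = a x * ∑ g : G, a g * φ g := by
    intro φ x
    rw [Finset.mul_sum]
    refine Fintype.sum_equiv (Equiv.mulLeft x⁻¹) _ _ (fun g => ?_)
    simp only [Equiv.coe_mulLeft]
    rw [← mul_assoc, ← hamul, mul_inv_cancel_left]
  have swap4 : ∀ (c : G → G → G → G → k),
      (∑ x : G, ∑ y : G, ∑ g : G, ∑ h : G, c x y g h)
        = ∑ g : G, ∑ h : G, ∑ x : G, ∑ y : G, c x y g h := by
    intro c
    calc (∑ x : G, ∑ y : G, ∑ g : G, ∑ h : G, c x y g h)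
        = ∑ x : G, ∑ g : G, ∑ h : G, ∑ y : G, c x y g h :=
          Finset.sum_congr rfl fun x _ =>
            Finset.sum_comm.trans (Finset.sum_congr rfl fun g _ => Finset.sum_comm)
      _ = ∑ g : G, ∑ x : G, ∑ h : G, ∑ y : G, c x y g h := Finset.sum_comm
      _ = ∑ g : G, ∑ h : G, ∑ x : G, ∑ y : G, c x y g h :=
          Finset.sum_congr rfl fun g _ => Finset.sum_comm
  intro z f
  -- key identity from qcomm
  have key : ∀ g h : G, R (z⁻¹ * g) f (z⁻¹ * h) 1 = R (g * z⁻¹) f (h * (mp.ltl z f)⁻¹) 1 := by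
    intro g h
    have hq := hcqt.qcomm g h f 1
    have hq' := congrFun (congrArg DFunLike.coe hq) (z, f)
    simp only [htau, hsig, hrtr, Units.val_one, one_mul, mul_one, mulB, mp.ltl_one,
      Finsupp.coe_finset_sum, Finset.sum_apply, Finsupp.smul_apply,
      apply_ite (fun s : (G × F) →₀ k => s (z, f)), Finsupp.single_apply,
      Finsupp.coe_zero, Pi.zero_apply, Prod.mk.injEq, and_true, smul_eq_mul] at hq'
    simp only [Finsupp.single_apply, Prod.mk.injEq, mul_one, and_true, mul_ite, mul_zero,
      Finset.sum_ite_eq, Finset.sum_ite_eq', Finset.mem_univ, if_true] at hq'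
    rw [hq']
    rw [Finset.sum_eq_single_of_mem (z⁻¹ * g) (Finset.mem_univ _) ?out,
      Finset.sum_eq_single_of_mem (z⁻¹ * h) (Finset.mem_univ _) ?inn,
      if_pos (by group), if_pos (by group)]
    case inn =>
      intro y _ hy
      by_cases h1 : h * y⁻¹ = g * (z⁻¹ * g)⁻¹
      · rw [if_pos h1]
        by_cases h2 : h * y⁻¹ = z
        · exact absurd (by rw [← h2]; group) hy
        · rw [if_neg h2]
      · rw [if_neg h1]
    case out =>
      intro x _ hx
      refine Finset.sum_eq_zero fun y _ => ?_
      by_cases h1 : h * y⁻¹ = g * x⁻¹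
      · rw [if_pos h1]
        by_cases h2 : h * y⁻¹ = z
        · refine absurd ?_ hx
          have h3 : g * x⁻¹ = z := h1.symm.trans h2
          rw [← h3]; group
        · rw [if_neg h2]
      · rw [if_neg h1]
  -- the character sum S and its invertibility
  set S : k := ∑ g : G, a g * ∑ h : G, a h * R g f h 1 with hSdef
  have base : ∀ g h : G,
      (∑ x : G, ∑ y : G, R (g * x⁻¹) f (h * y⁻¹) 1 * R' x f y 1)
        = (if g = 1 then (1 : k) else 0) * (if h = 1 then (1 : k) else 0) := by
    intro g h
    have := hinv1 g h f 1
    simpa [htau, hrtr] using this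
  have inner2 : ∀ x y : G,
      (∑ g : G, a g * ∑ h : G, a h * R (g * x⁻¹) f (h * y⁻¹) 1) = a x * a y * S := by
    intro x y
    calc ∑ g : G, a g * ∑ h : G, a h * R (g * x⁻¹) f (h * y⁻¹) 1
        = ∑ g : G, a g * (a y * ∑ h : G, a h * R (g * x⁻¹) f h 1) :=
          Finset.sum_congr rfl fun g _ =>
            congrArg (fun t => a g * t) (shiftR (fun h => R (g * x⁻¹) f h 1) y)
      _ = a y * ∑ g : G, a g * ∑ h : G, a h * R (g * x⁻¹) f h 1 := by
          rw [Finset.mul_sum]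
          exact Finset.sum_congr rfl fun g _ => by ring
      _ = a y * (a x * S) :=
          congrArg (fun t => a y * t) (shiftR (fun w => ∑ h : G, a h * R w f h 1) x)
      _ = a x * a y * S := by ring
  set T : k := ∑ x : G, ∑ y : G, a x * a y * R' x f y 1 with hTdef
  have expand : (∑ g : G, ∑ h : G,
      a g * a h * ((if g = 1 then (1 : k) else 0) * (if h = 1 then (1 : k) else 0))) = 1 := by
    simp [mul_ite, ite_mul, mul_zero, zero_mul, mul_one, Finset.sum_ite_eq', ha1]
  have hST : S * T = 1 := by
    calc S * T
        = ∑ x : G, ∑ y : G, (a x * a y * S) * R' x f y 1 := by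
          rw [Finset.mul_sum]
          refine Finset.sum_congr rfl fun x _ => ?_
          rw [Finset.mul_sum]
          exact Finset.sum_congr rfl fun y _ => by ring
      _ = ∑ x : G, ∑ y : G,
            (∑ g : G, a g * ∑ h : G, a h * R (g * x⁻¹) f (h * y⁻¹) 1) * R' x f y 1 :=
          Finset.sum_congr rfl fun x _ => Finset.sum_congr rfl fun y _ => by
            rw [inner2 x y]
      _ = ∑ x : G, ∑ y : G, ∑ g : G, ∑ h : G,
            (a g * (a h * R (g * x⁻¹) f (h * y⁻¹) 1)) * R' x f y 1 :=
          Finset.sum_congr rfl fun x _ => Finset.sum_congr rfl fun y _ => by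
            simp only [Finset.sum_mul, Finset.mul_sum, mul_assoc]
      _ = ∑ g : G, ∑ h : G, ∑ x : G, ∑ y : G,
            (a g * (a h * R (g * x⁻¹) f (h * y⁻¹) 1)) * R' x f y 1 := swap4 _
      _ = ∑ g : G, ∑ h : G, a g * a h *
            ∑ x : G, ∑ y : G, R (g * x⁻¹) f (h * y⁻¹) 1 * R' x f y 1 :=
          Finset.sum_congr rfl fun g _ => Finset.sum_congr rfl fun h _ => by
            rw [Finset.mul_sum]
            refine Finset.sum_congr rfl fun x _ => ?_
            rw [Finset.mul_sum]
            exact Finset.sum_congr rfl fun y _ => by ring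
      _ = ∑ g : G, ∑ h : G, a g * a h *
            ((if g = 1 then (1 : k) else 0) * (if h = 1 then (1 : k) else 0)) :=
          Finset.sum_congr rfl fun g _ => Finset.sum_congr rfl fun h _ => by rw [base g h]
      _ = 1 := expand
  have hSne : S ≠ 0 := fun h0 => by rw [h0, zero_mul] at hST; exact zero_ne_one hST
  -- the two evaluations of the shifted sum
  have left_eq : (∑ g : G, a g * ∑ h : G, a h * R (g * z⁻¹) f (h * (mp.ltl z f)⁻¹) 1)
      = a (mp.ltl z f) * (a z * S) := by
    calc ∑ g : G, a g * ∑ h : G, a h * R (g * z⁻¹) f (h * (mp.ltl z f)⁻¹) 1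
        = ∑ g : G, a g * (a (mp.ltl z f) * ∑ h : G, a h * R (g * z⁻¹) f h 1) :=
          Finset.sum_congr rfl fun g _ =>
            congrArg (fun t => a g * t) (shiftR (fun h => R (g * z⁻¹) f h 1) (mp.ltl z f))
      _ = a (mp.ltl z f) * ∑ g : G, a g * ∑ h : G, a h * R (g * z⁻¹) f h 1 := by
          rw [Finset.mul_sum]
          exact Finset.sum_congr rfl fun g _ => by ring
      _ = a (mp.ltl z f) * (a z * S) :=
          congrArg (fun t => a (mp.ltl z f) * t)
            (shiftR (fun w => ∑ h : G, a h * R w f h 1) z)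
  have right_eq : (∑ g : G, a g * ∑ h : G, a h * R (z⁻¹ * g) f (z⁻¹ * h) 1)
      = a z * (a z * S) := by
    calc ∑ g : G, a g * ∑ h : G, a h * R (z⁻¹ * g) f (z⁻¹ * h) 1
        = ∑ g : G, a g * (a z * ∑ h : G, a h * R (z⁻¹ * g) f h 1) :=
          Finset.sum_congr rfl fun g _ =>
            congrArg (fun t => a g * t) (shiftL (fun h => R (z⁻¹ * g) f h 1) z)
      _ = a z * ∑ g : G, a g * ∑ h : G, a h * R (z⁻¹ * g) f h 1 := by
          rw [Finset.mul_sum]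
          exact Finset.sum_congr rfl fun g _ => by ring
      _ = a z * (a z * S) :=
          congrArg (fun t => a z * t) (shiftL (fun w => ∑ h : G, a h * R w f h 1) z)
  have e_key : (∑ g : G, a g * ∑ h : G, a h * R (g * z⁻¹) f (h * (mp.ltl z f)⁻¹) 1)
      = ∑ g : G, a g * ∑ h : G, a h * R (z⁻¹ * g) f (z⁻¹ * h) 1 :=
    Finset.sum_congr rfl fun g _ => congrArg (fun t => a g * t)
      (Finset.sum_congr rfl fun h _ => by rw [← key g h])
  have main1 : a (mp.ltl z f) * (a z * S) = a z * (a z * S) :=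
    left_eq.symm.trans (e_key.trans right_eq)
  have hC : a z * S ≠ 0 := mul_ne_zero (hane z) hSne
  exact (mul_right_cancel₀ hC main1).symm
end

section
/- Let F and G be finite groups, (F, G, ◁, ▷) a matched pair, and σ, τ cocycle data. If the Hopf algebra H = k^G τ#_σ kF admits a quasitriangular structure, then O'_g O'_{g'} = O'_{g'} O'_g for all g, g' ∈ G, where O'_g = {g ◁ f : f ∈ F} ⊆ G and O'_g O'_{g'} = {x y : x ∈ O'_g, y ∈ O'_{g'}}. -/
section QT

variable {k F G : Type*} [Field k] [Group F] [Group G]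
  [Fintype F] [Fintype G] [DecidableEq F] [DecidableEq G]

/-- The unit `Σ_{x ∈ G} p_x # 1` of `H = k^G τ#_σ kF`, realized in `(G × F) →₀ k`. -/
noncomputable def oneH (k F G : Type*) [Field k] [Group F] [Group G] [Fintype G] :
    (G × F) →₀ k :=
  ∑ x : G, Finsupp.single (x, (1 : F)) (1 : k)

/-- The tensor product of two elements of `H`, as an element of `H ⊗ H` (realized as
`((G × F) × (G × F)) →₀ k`). -/
noncomputable def tensor2 (p q : (G × F) →₀ k) : ((G × F) × (G × F)) →₀ k :=
  p.sum fun i c => q.sum fun j d => Finsupp.single (i, j) (c * d)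

/-- The tensor product of three elements of `H`, as an element of `H ⊗ H ⊗ H`. -/
noncomputable def tensor3 (p q r : (G × F) →₀ k) :
    ((G × F) × (G × F) × (G × F)) →₀ k :=
  p.sum fun i c => q.sum fun j d => r.sum fun l e => Finsupp.single (i, j, l) (c * d * e)

/-- Multiplication of `H ⊗ H` (componentwise, `(a ⊗ b)(c ⊗ d) = ac ⊗ bd`). -/
noncomputable def hmul2 (mp : MatchedPair F G) (cd : CocycleData k F G mp)
    (p q : ((G × F) × (G × F)) →₀ k) : ((G × F) × (G × F)) →₀ k :=
  p.sum fun i c => q.sum fun j d =>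
    (c * d) • tensor2 (mulB mp cd i.1 j.1) (mulB mp cd i.2 j.2)

/-- Multiplication of `H ⊗ H ⊗ H` (componentwise). -/
noncomputable def hmul3 (mp : MatchedPair F G) (cd : CocycleData k F G mp)
    (p q : ((G × F) × (G × F) × (G × F)) →₀ k) :
    ((G × F) × (G × F) × (G × F)) →₀ k :=
  p.sum fun i c => q.sum fun j d =>
    (c * d) • tensor3 (mulB mp cd i.1 j.1) (mulB mp cd i.2.1 j.2.1)
      (mulB mp cd i.2.2 j.2.2)

/-- The element `R = Σ_{i,j} r i j · e_i ⊗ e_j` of `H ⊗ H` with coefficients `r`. -/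
noncomputable def toH2 (r : G × F → G × F → k) : ((G × F) × (G × F)) →₀ k :=
  ∑ i : G × F, ∑ j : G × F, Finsupp.single (i, j) (r i j)

/-- `Δ(p_g # f) = Σ_x τ(g x⁻¹, x; f)(p_{g x⁻¹} # (x ▷ f)) ⊗ (p_x # f)` on a basis
element, as an element of `H ⊗ H`. -/
noncomputable def deltaB (mp : MatchedPair F G) (cd : CocycleData k F G mp)
    (i : G × F) : ((G × F) × (G × F)) →₀ k :=
  ∑ w : G, Finsupp.single ((i.1 * w⁻¹, mp.rtr w i.2), (w, i.2))
    ((cd.tau (i.1 * w⁻¹) w i.2 : kˣ) : k)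

/-- `Δᵒᵖ(p_g # f)` (the coopposite comultiplication) on a basis element. -/
noncomputable def deltaOpB (mp : MatchedPair F G) (cd : CocycleData k F G mp)
    (i : G × F) : ((G × F) × (G × F)) →₀ k :=
  ∑ w : G, Finsupp.single ((w, i.2), (i.1 * w⁻¹, mp.rtr w i.2))
    ((cd.tau (i.1 * w⁻¹) w i.2 : kˣ) : k)

/-- `R₁₂ = Σ R⁽¹⁾ ⊗ R⁽²⁾ ⊗ 1` in `H ⊗ H ⊗ H`. -/
noncomputable def R12 (r : G × F → G × F → k) : ((G × F) × (G × F) × (G × F)) →₀ k :=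
  ∑ i : G × F, ∑ j : G × F, ∑ m : G, Finsupp.single (i, j, (m, (1 : F))) (r i j)

/-- `R₁₃ = Σ R⁽¹⁾ ⊗ 1 ⊗ R⁽²⁾` in `H ⊗ H ⊗ H`. -/
noncomputable def R13 (r : G × F → G × F → k) : ((G × F) × (G × F) × (G × F)) →₀ k :=
  ∑ i : G × F, ∑ j : G × F, ∑ m : G, Finsupp.single (i, (m, (1 : F)), j) (r i j)

/-- `R₂₃ = Σ 1 ⊗ R⁽¹⁾ ⊗ R⁽²⁾` in `H ⊗ H ⊗ H`. -/
noncomputable def R23 (r : G × F → G × F → k) : ((G × F) × (G × F) × (G × F)) →₀ k :=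
  ∑ i : G × F, ∑ j : G × F, ∑ m : G, Finsupp.single ((m, (1 : F)), i, j) (r i j)

/-- `(Δ ⊗ id)(R)` in `H ⊗ H ⊗ H`, for `R` with coefficients `r`. -/
noncomputable def deltaTensorId (mp : MatchedPair F G) (cd : CocycleData k F G mp)
    (r : G × F → G × F → k) : ((G × F) × (G × F) × (G × F)) →₀ k :=
  ∑ i : G × F, ∑ j : G × F, ∑ w : G,
    Finsupp.single ((i.1 * w⁻¹, mp.rtr w i.2), (w, i.2), j)
      (r i j * ((cd.tau (i.1 * w⁻¹) w i.2 : kˣ) : k))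

/-- `(id ⊗ Δ)(R)` in `H ⊗ H ⊗ H`, for `R` with coefficients `r`. -/
noncomputable def idTensorDelta (mp : MatchedPair F G) (cd : CocycleData k F G mp)
    (r : G × F → G × F → k) : ((G × F) × (G × F) × (G × F)) →₀ k :=
  ∑ i : G × F, ∑ j : G × F, ∑ w : G,
    Finsupp.single (i, (j.1 * w⁻¹, mp.rtr w j.2), (w, j.2))
      (r i j * ((cd.tau (j.1 * w⁻¹) w j.2 : kˣ) : k))

/-- `R = Σ_{i,j} r i j · e_i ⊗ e_j ∈ H ⊗ H` is a quasitriangular structure on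
`H = k^G τ#_σ kF`: it is invertible in `H ⊗ H`, and satisfies
`(Δ ⊗ id)(R) = R₁₃ R₂₃`, `(id ⊗ Δ)(R) = R₁₃ R₁₂`, and `Δᵒᵖ(h) R = R Δ(h)` for all
`h ∈ H` (checked on basis elements, which suffices by linearity). -/
def IsQT (mp : MatchedPair F G) (cd : CocycleData k F G mp)
    (r : G × F → G × F → k) : Prop :=
  (∃ r' : G × F → G × F → k,
      hmul2 mp cd (toH2 r) (toH2 r') = tensor2 (oneH k F G) (oneH k F G) ∧
      hmul2 mp cd (toH2 r') (toH2 r) = tensor2 (oneH k F G) (oneH k F G)) ∧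
  deltaTensorId mp cd r = hmul3 mp cd (R13 r) (R23 r) ∧
  idTensorDelta mp cd r = hmul3 mp cd (R13 r) (R12 r) ∧
  ∀ i : G × F, hmul2 mp cd (deltaOpB mp cd i) (toH2 r)
    = hmul2 mp cd (toH2 r) (deltaB mp cd i)

end QT


section AuxProof

variable {k F G : Type*} [Field k] [Group F] [Group G]
  [Fintype F] [Fintype G] [DecidableEq F] [DecidableEq G]

lemma mp_one_ltl (mp : MatchedPair F G) (f : F) : mp.ltl 1 f = 1 := by
  have h := mp.mul_ltl 1 1 f
  rw [one_mul, mp.one_rtr] at h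
  have h2 : mp.ltl 1 f * 1 = mp.ltl 1 f * mp.ltl 1 f := by rw [mul_one]; exact h
  exact (mul_left_cancel h2).symm

lemma mp_rtr_one (mp : MatchedPair F G) (g : G) : mp.rtr g 1 = 1 := by
  have h := mp.rtr_mul g 1 1
  rw [one_mul, mp.ltl_one] at h
  have h2 : mp.rtr g 1 * 1 = mp.rtr g 1 * mp.rtr g 1 := by rw [mul_one]; exact h
  exact (mul_left_cancel h2).symm

lemma tensor2_apply (p q : (G × F) →₀ k) (z : (G × F) × (G × F)) :
    tensor2 p q z = p z.1 * q z.2 := by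
  classical
  rw [tensor2, Finsupp.sum_apply,
    Finsupp.sum_fintype _ _ (fun i => by simp [Finsupp.sum])]
  rw [show (∑ i, ((q.sum fun j d => Finsupp.single (i, j) (p i * d)) z))
      = ∑ i, ∑ j, (Finsupp.single ((i, j) : (G × F) × (G × F)) (p i * q j)) z from
    Finset.sum_congr rfl fun i _ => by
      rw [Finsupp.sum_apply, Finsupp.sum_fintype _ _ (fun j => by simp)]]
  rw [Fintype.sum_eq_single z.1 (fun i hi => Finset.sum_eq_zero fun j _ => by
    rw [Finsupp.single_apply, if_neg (fun hc => hi (congrArg Prod.fst hc))])]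
  rw [Fintype.sum_eq_single z.2 (fun j hj => by
    rw [Finsupp.single_apply, if_neg (fun hc => hj (congrArg Prod.snd hc))])]
  rw [Finsupp.single_apply, if_pos rfl]

lemma hmul2_apply (mp : MatchedPair F G) (cd : CocycleData k F G mp)
    (p q : ((G × F) × (G × F)) →₀ k) (z : (G × F) × (G × F)) :
    hmul2 mp cd p q z = ∑ i : (G × F) × (G × F), ∑ j : (G × F) × (G × F),
      p i * q j * (mulB mp cd i.1 j.1 z.1 * mulB mp cd i.2 j.2 z.2) := by
  classical
  rw [hmul2, Finsupp.sum_apply,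
    Finsupp.sum_fintype _ _ (fun i => by simp [Finsupp.sum])]
  refine Finset.sum_congr rfl fun i _ => ?_
  rw [Finsupp.sum_apply, Finsupp.sum_fintype _ _ (fun j => by simp)]
  refine Finset.sum_congr rfl fun j _ => ?_
  rw [Finsupp.smul_apply, smul_eq_mul]
  rw [show ((tensor2 (mulB mp cd i.1 j.1) (mulB mp cd i.2 j.2)) z)
      = mulB mp cd i.1 j.1 z.1 * mulB mp cd i.2 j.2 z.2 from tensor2_apply _ _ _]

lemma toH2_apply (r : G × F → G × F → k) (z : (G × F) × (G × F)) :
    toH2 r z = r z.1 z.2 := by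
  classical
  rw [toH2]
  rw [Finsupp.finset_sum_apply]
  rw [Fintype.sum_eq_single z.1 (fun i hi => by
    rw [Finsupp.finset_sum_apply]
    exact Finset.sum_eq_zero fun j _ => by
      rw [Finsupp.single_apply, if_neg (fun hc => hi (congrArg Prod.fst hc))])]
  rw [Finsupp.finset_sum_apply]
  rw [Fintype.sum_eq_single z.2 (fun j hj => by
    rw [Finsupp.single_apply, if_neg (fun hc => hj (congrArg Prod.snd hc))])]
  rw [Finsupp.single_apply, if_pos rfl]

lemma mulB_apply (mp : MatchedPair F G) (cd : CocycleData k F G mp)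
    (i j : G × F) (z : G × F) :
    mulB mp cd i j z
      = if mp.ltl i.1 i.2 = j.1 ∧ z = (i.1, i.2 * j.2)
          then ((cd.sig i.1 i.2 j.2 : kˣ) : k) else 0 := by
  classical
  rw [mulB]
  by_cases h1 : mp.ltl i.1 i.2 = j.1
  · rw [if_pos h1, Finsupp.single_apply]
    by_cases h2 : z = (i.1, i.2 * j.2)
    · rw [if_pos h2.symm, if_pos ⟨h1, h2⟩]
    · rw [if_neg (fun hc => h2 hc.symm), if_neg (fun hc => h2 hc.2)]
  · rw [if_neg h1, if_neg (fun hc => h1 hc.1)]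
    simp only [Finsupp.coe_zero, Pi.zero_apply]

lemma oneH_apply (z : G × F) :
    oneH k F G z = if z.2 = 1 then 1 else 0 := by
  classical
  rw [oneH, Finsupp.finset_sum_apply]
  by_cases h : z.2 = 1
  · rw [Fintype.sum_eq_single z.1 (fun x hx => by
      rw [Finsupp.single_apply, if_neg (fun hc => hx (congrArg Prod.fst hc))])]
    rw [Finsupp.single_apply, if_pos (by rw [Prod.ext_iff]; exact ⟨rfl, h.symm⟩), if_pos h]
  · rw [if_neg h]
    exact Finset.sum_eq_zero fun x _ => by
      rw [Finsupp.single_apply, if_neg (fun hc => h (congrArg Prod.snd hc).symm)]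

lemma deltaOpB_one_apply (mp : MatchedPair F G) (cd : CocycleData k F G mp)
    (a : G) (z : (G × F) × (G × F)) :
    deltaOpB mp cd (a, 1) z
      = if z = ((z.1.1, 1), (a * z.1.1⁻¹, 1)) then 1 else 0 := by
  classical
  rw [deltaOpB, Finsupp.finset_sum_apply]
  simp only [mp_rtr_one, cd.tau_one_right, Units.val_one]
  by_cases h : z = ((z.1.1, 1), (a * z.1.1⁻¹, 1))
  · rw [Fintype.sum_eq_single z.1.1 (fun w hw => by
      rw [Finsupp.single_apply, if_neg (by
        intro hc; apply hw
        have := congrArg (fun t : (G × F) × (G × F) => t.1.1) hc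
        exact this)]), Finsupp.single_apply, if_pos h.symm, if_pos h]
  · rw [if_neg h]
    exact Finset.sum_eq_zero fun w _ => by
      rw [Finsupp.single_apply, if_neg (by
        intro hc; apply h
        rw [← hc])]

lemma deltaB_one_apply (mp : MatchedPair F G) (cd : CocycleData k F G mp)
    (a : G) (z : (G × F) × (G × F)) :
    deltaB mp cd (a, 1) z
      = if z = ((a * z.2.1⁻¹, 1), (z.2.1, 1)) then 1 else 0 := by
  classical
  rw [deltaB, Finsupp.finset_sum_apply]
  simp only [mp_rtr_one, cd.tau_one_right, Units.val_one]
  by_cases h : z = ((a * z.2.1⁻¹, 1), (z.2.1, 1))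
  · rw [Fintype.sum_eq_single z.2.1 (fun w hw => by
      rw [Finsupp.single_apply, if_neg (by
        intro hc; apply hw
        have := congrArg (fun t : (G × F) × (G × F) => t.2.1) hc
        exact this)]), Finsupp.single_apply, if_pos h.symm, if_pos h]
  · rw [if_neg h]
    exact Finset.sum_eq_zero fun w _ => by
      rw [Finsupp.single_apply, if_neg (by
        intro hc; apply h
        rw [← hc])]

lemma step_supp (mp : MatchedPair F G) (cd : CocycleData k F G mp)
    (r : G × F → G × F → k)
    (hq : ∀ i : G × F, hmul2 mp cd (deltaOpB mp cd i) (toH2 r)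
      = hmul2 mp cd (toH2 r) (deltaB mp cd i))
    (g h : G) (f f' : F) (hne : r (g, f) (h, f') ≠ 0) :
    mp.ltl g f * mp.ltl h f' = h * g := by
  classical
  by_contra hc
  have H := DFunLike.congr_fun (hq (h * g, 1)) ((g, f), (h, f'))
  rw [hmul2_apply, hmul2_apply] at H
  dsimp only at H
  -- LHS = r (g,f) (h,f')
  have hL : (∑ i : (G × F) × (G × F), ∑ j : (G × F) × (G × F),
      deltaOpB mp cd (h * g, 1) i * toH2 r j *
        (mulB mp cd i.1 j.1 (g, f) * mulB mp cd i.2 j.2 (h, f')))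
      = r (g, f) (h, f') := by
    rw [Fintype.sum_eq_single (((g, (1 : F)), (h, (1 : F))) : (G × F) × (G × F))
      (fun i hi => Finset.sum_eq_zero fun j _ => by
        rw [deltaOpB_one_apply]
        split_ifs with h1
        · rw [mulB_apply, mulB_apply]
          by_cases h2 : mp.ltl i.1.1 i.1.2 = j.1.1 ∧ ((g, f) : G × F) = (i.1.1, i.1.2 * j.1.2)
          · -- then i.1.1 = g, and from h1 i = ((g,1),(h*g*g⁻¹,1)) = ((g,1),(h,1)), contra hi
            exfalso
            apply hi
            have hg1 : i.1.1 = g := (congrArg Prod.fst h2.2).symm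
            rw [h1, hg1]
            simp
          · rw [if_neg h2]
            ring
        · ring)]
    rw [Fintype.sum_eq_single (((g, f), (h, f')) : (G × F) × (G × F))
      (fun j hj => by
        rw [mulB_apply, mulB_apply]
        by_cases h2 : mp.ltl g (1 : F) = j.1.1 ∧ ((g, f) : G × F) = (g, 1 * j.1.2)
        · by_cases h3 : mp.ltl h (1 : F) = j.2.1 ∧ ((h, f') : G × F) = (h, 1 * j.2.2)
          · exfalso
            apply hj
            have e1 : j.1.1 = g := by rw [← h2.1, mp.ltl_one]
            have e2 : j.1.2 = f := by
              have := congrArg Prod.snd h2.2; rw [one_mul] at this; exact this.symm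
            have e3 : j.2.1 = h := by rw [← h3.1, mp.ltl_one]
            have e4 : j.2.2 = f' := by
              have := congrArg Prod.snd h3.2; rw [one_mul] at this; exact this.symm
            ext <;> simp [e1, e2, e3, e4]
          · rw [if_neg h3]; ring
        · rw [if_neg h2]; ring)]
    rw [deltaOpB_one_apply, mulB_apply, mulB_apply, toH2_apply]
    rw [if_pos (by simp), if_pos (by simp [mp.ltl_one]), if_pos (by simp [mp.ltl_one])]
    simp [cd.sig_one_left]
  -- RHS = 0
  have hRz : (∑ i : (G × F) × (G × F), ∑ j : (G × F) × (G × F),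
      toH2 r i * deltaB mp cd (h * g, 1) j *
        (mulB mp cd i.1 j.1 (g, f) * mulB mp cd i.2 j.2 (h, f')))
      = 0 := by
    refine Finset.sum_eq_zero fun i _ => Finset.sum_eq_zero fun j _ => ?_
    rw [deltaB_one_apply]
    split_ifs with h1
    · rw [mulB_apply, mulB_apply]
      by_cases h2 : mp.ltl i.1.1 i.1.2 = j.1.1 ∧ ((g, f) : G × F) = (i.1.1, i.1.2 * j.1.2)
      · by_cases h3 : mp.ltl i.2.1 i.2.2 = j.2.1 ∧ ((h, f') : G × F) = (i.2.1, i.2.2 * j.2.2)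
        · exfalso
          apply hc
          have hj1 : j.1.2 = (1 : F) := congrArg (fun t : (G × F) × (G × F) => t.1.2) h1
          have hj2 : j.2.2 = (1 : F) := congrArg (fun t : (G × F) × (G × F) => t.2.2) h1
          have hj3 : j.1.1 = h * g * j.2.1⁻¹ :=
            congrArg (fun t : (G × F) × (G × F) => t.1.1) h1
          have e1 : i.1.1 = g := (congrArg Prod.fst h2.2).symm
          have e2 : i.1.2 = f := by
            have := congrArg Prod.snd h2.2
            rw [hj1, mul_one] at this; exact this.symm
          have e3 : i.2.1 = h := (congrArg Prod.fst h3.2).symm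
          have e4 : i.2.2 = f' := by
            have := congrArg Prod.snd h3.2
            rw [hj2, mul_one] at this; exact this.symm
          have k1 : mp.ltl g f = h * g * j.2.1⁻¹ := by
            rw [← hj3, ← h2.1, e1, e2]
          have k2 : mp.ltl h f' = j.2.1 := by rw [← h3.1, e3, e4]
          rw [k1, k2]
          group
        · rw [if_neg h3]; ring
      · rw [if_neg h2]; ring
    · ring
  rw [hL, hRz] at H
  exact hne H

lemma step_full (mp : MatchedPair F G) (cd : CocycleData k F G mp)
    (r r' : G × F → G × F → k)
    (hinv : hmul2 mp cd (toH2 r) (toH2 r') = tensor2 (oneH k F G) (oneH k F G))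
    (x y : G) : ∃ m n : F, r (x, m) (y, n) ≠ 0 := by
  classical
  by_contra hcon
  push_neg at hcon
  have H := DFunLike.congr_fun hinv (((x, (1 : F)), (y, (1 : F))) : (G × F) × (G × F))
  rw [hmul2_apply, tensor2_apply, oneH_apply, oneH_apply] at H
  dsimp only at H
  have hz : (∑ i : (G × F) × (G × F), ∑ j : (G × F) × (G × F),
      toH2 r i * toH2 r' j *
        (mulB mp cd i.1 j.1 (x, (1 : F)) * mulB mp cd i.2 j.2 (y, (1 : F))))
      = 0 := by
    refine Finset.sum_eq_zero fun i _ => Finset.sum_eq_zero fun j _ => ?_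
    rw [mulB_apply, mulB_apply]
    by_cases h2 : mp.ltl i.1.1 i.1.2 = j.1.1 ∧ ((x, (1 : F)) : G × F) = (i.1.1, i.1.2 * j.1.2)
    · by_cases h3 : mp.ltl i.2.1 i.2.2 = j.2.1 ∧ ((y, (1 : F)) : G × F) = (i.2.1, i.2.2 * j.2.2)
      · have e1 : i.1.1 = x := (congrArg Prod.fst h2.2).symm
        have e2 : i.2.1 = y := (congrArg Prod.fst h3.2).symm
        rw [toH2_apply]
        have : r i.1 i.2 = 0 := by
          have : i.1 = (x, i.1.2) := by rw [← e1]
          rw [this, show i.2 = (y, i.2.2) from by rw [← e2]]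
          exact hcon _ _
        rw [this]
        ring
      · rw [if_neg h3]; ring
    · rw [if_neg h2]; ring
  rw [hz] at H
  simp at H

lemma key_swap (mp : MatchedPair F G) (cd : CocycleData k F G mp)
    (r : G × F → G × F → k) (hQT : IsQT mp cd r)
    (g g' : G) (f f' : F) :
    ∃ f₁ f₂ : F, mp.ltl g f * mp.ltl g' f' = mp.ltl g' f₁ * mp.ltl g f₂ := by
  obtain ⟨⟨r', hinv1, _⟩, _, _, hq⟩ := hQT
  obtain ⟨m, n, hmn⟩ := step_full mp cd r r' hinv1 (mp.ltl g' f') (mp.ltl g f)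
  have hs := step_supp mp cd r hq (mp.ltl g' f') (mp.ltl g f) m n hmn
  refine ⟨f' * m, f * n, ?_⟩
  rw [mp.ltl_mul, mp.ltl_mul, hs]

end AuxProof

/-- If `F` and `G` are finite and `H = k^G τ#_σ kF` admits a quasitriangular structure,
then `O'_g O'_{g'} = O'_{g'} O'_g` for all `g, g' ∈ G`, where `O'_g = {g ◁ f : f ∈ F}`. -/
theorem orbits_ltl_commute_of_qt {k F G : Type*} [Field k] [IsAlgClosed k] [CharZero k]
    [Group F] [Group G] [Fintype F] [Fintype G] [DecidableEq F] [DecidableEq G]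
    (mp : MatchedPair F G) (cd : CocycleData k F G mp)
    (hR : ∃ r : G × F → G × F → k, IsQT mp cd r) :
    ∀ g g' : G,
      Set.image2 (· * ·) (Set.range fun f : F => mp.ltl g f)
          (Set.range fun f : F => mp.ltl g' f)
        = Set.image2 (· * ·) (Set.range fun f : F => mp.ltl g' f)
          (Set.range fun f : F => mp.ltl g f) := by
  obtain ⟨r, hQT⟩ := hR
  intro g g'
  ext a
  simp only [Set.mem_image2, Set.mem_range]
  constructor
  · rintro ⟨x, ⟨f, rfl⟩, y, ⟨f', rfl⟩, rfl⟩
    obtain ⟨f₁, f₂, h⟩ := key_swap mp cd r hQT g g' f f'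
    exact ⟨_, ⟨f₁, rfl⟩, _, ⟨f₂, rfl⟩, h.symm⟩
  · rintro ⟨x, ⟨f, rfl⟩, y, ⟨f', rfl⟩, rfl⟩
    obtain ⟨f₁, f₂, h⟩ := key_swap mp cd r hQT g' g f f'
    exact ⟨_, ⟨f₁, rfl⟩, _, ⟨f₂, rfl⟩, h.symm⟩
end

section
/- Let G be a finite group, F a group, (F, G, ◁, ▷) a matched pair, σ, τ cocycle data, and let (k^G τ#_σ kF, R) be a coquasitriangular Hopf algebra. If g, h ∈ G and f, f' ∈ F satisfy f f' ≠ (h ▷ f')(g ▷ f) in F, then R(p_g # f, p_h # f') = 0. -/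
/-- If `(k^G τ#_σ kF, R)` is coquasitriangular and `f f' ≠ (h ▷ f')(g ▷ f)` in `F`,
then `R(p_g # f, p_h # f') = 0`. -/
theorem R_eq_zero_of_ne {k F G : Type*} [Field k] [IsAlgClosed k] [CharZero k]
    [Group F] [Group G] [Fintype G] [DecidableEq G]
    (mp : MatchedPair F G) (cd : CocycleData k F G mp)
    (R : G → F → G → F → k) (hR : IsCQT mp cd R)
    (g h : G) (f f' : F)
    (hne : f * f' ≠ mp.rtr h f' * mp.rtr g f) :
    R g f h f' = 0 := by
  classical
  have h1 : ∀ f : F, mp.ltl 1 f = 1 := by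
    intro f
    have h2 := mp.mul_ltl 1 1 f
    rw [one_mul, mp.one_rtr] at h2
    exact left_eq_mul.mp h2
  set p : G × F := (1, mp.rtr h f' * mp.rtr g f) with hp
  have key := congrArg (fun v : (G × F) →₀ k => v p) (hR.qcomm g h f f')
  simp only [Finsupp.finset_sum_apply, Finsupp.smul_apply] at key
  have hzero : ∀ x y : G, (mulB mp cd (x, f) (y, f')) p = 0 := by
    intro x y
    unfold mulB
    split
    · rw [Finsupp.single_apply, if_neg]
      intro hcontra
      exact hne (congrArg Prod.snd hcontra)
    · rfl
  have hrhs : ∀ x y : G,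
      (mulB mp cd (h * y⁻¹, mp.rtr y f') (g * x⁻¹, mp.rtr x f)) p
        = if x = g ∧ y = h then (1 : k) else 0 := by
    intro x y
    unfold mulB
    dsimp only
    split
    case isTrue hc =>
      rw [Finsupp.single_apply]
      split
      case isTrue hpoint =>
        have hy : y = h := by
          have h3 := congrArg Prod.fst hpoint
          simp only [hp] at h3
          exact (mul_inv_eq_one.mp h3).symm
        have hx : x = g := by
          rw [hy, mul_inv_cancel, h1] at hc
          exact (mul_inv_eq_one.mp hc.symm).symm
        rw [if_pos ⟨hx, hy⟩, hy, hx, mul_inv_cancel, cd.one_sig, Units.val_one]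
      case isFalse hpoint =>
        have hn : ¬(x = g ∧ y = h) := by
          rintro ⟨rfl, rfl⟩
          exact hpoint (by simp [hp])
        rw [if_neg hn]
    case isFalse hc =>
      have hn : ¬(x = g ∧ y = h) := by
        rintro ⟨rfl, rfl⟩
        exact hc (by simp [h1])
      simp [hn]
  simp only [hzero, hrhs, smul_eq_mul, mul_zero, Finset.sum_const_zero] at key
  have key2 := key.symm
  rw [Finset.sum_comm] at key2
  simp only [mul_ite, mul_one, mul_zero] at key2
  rw [Finset.sum_eq_single h (fun b _ hb => by
        apply Finset.sum_eq_zero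
        intro x _
        rw [if_neg (fun hxy => hb hxy.2)])
      (fun hb => absurd (Finset.mem_univ h) hb)] at key2
  rw [Finset.sum_eq_single g (fun b _ hb => by rw [if_neg (fun hxy => hb hxy.1)])
      (fun hb => absurd (Finset.mem_univ g) hb)] at key2
  rw [if_pos ⟨rfl, rfl⟩] at key2
  simp only [mul_inv_cancel, cd.one_tau, Units.val_one, one_mul] at key2
  exact key2
end

section
/- Let G be a finite group, F an abelian group, (F, G, ◁, ▷) a matched pair, σ, τ cocycle data, and let (k^G τ#_σ kF, R) be a coquasitriangular Hopf algebra. For g, h ∈ G and f, f' ∈ F: if either (g ∈ G_f and h ∉ G_{f'}) or (g ∉ G_f and h ∈ G_{f'}), where G_f = {x ∈ G : x ▷ f = f}, then R(p_g # f, p_h # f') = 0. -/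
lemma MatchedPair.one_ltl {F G : Type*} [Group F] [Group G] (mp : MatchedPair F G)
    (f : F) : mp.ltl 1 f = 1 := by
  have h := mp.mul_ltl 1 1 f
  rw [one_mul, mp.one_rtr] at h
  exact mul_eq_left.mp h.symm

/-- Let `F` be abelian and `(k^G τ#_σ kF, R)` coquasitriangular. If either
(`g ∈ G_f` and `h ∉ G_{f'}`) or (`g ∉ G_f` and `h ∈ G_{f'}`), then
`R(p_g # f, p_h # f') = 0`. -/
theorem R_eq_zero_of_stabilizer_mismatch {k F G : Type*} [Field k] [IsAlgClosed k]
    [CharZero k] [CommGroup F] [Group G] [Fintype G] [DecidableEq G]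
    (mp : MatchedPair F G) (cd : CocycleData k F G mp)
    (R : G → F → G → F → k) (hR : IsCQT mp cd R)
    (g h : G) (f f' : F)
    (hcase : (mp.rtr g f = f ∧ mp.rtr h f' ≠ f') ∨ (mp.rtr g f ≠ f ∧ mp.rtr h f' = f')) :
    R g f h f' = 0 := by
  classical
  set c : F := mp.rtr h f' * mp.rtr g f with hcdef
  have hcne : c ≠ f * f' := by
    rcases hcase with ⟨h1, h2⟩ | ⟨h1, h2⟩
    · intro hEq
      rw [hcdef, h1] at hEq
      exact h2 (mul_right_cancel (hEq.trans (mul_comm f f')))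
    · intro hEq
      rw [hcdef, h2] at hEq
      exact h1 (mul_left_cancel (a := f') (by rw [hEq, mul_comm]))
  have H := DFunLike.congr_fun (hR.qcomm g h f f') (1, c)
  simp only [Finsupp.finset_sum_apply, Finsupp.smul_apply, smul_eq_mul] at H
  have HL : ∀ x y : G, mulB mp cd (x, f) (y, f') (1, c) = 0 := by
    intro x y
    simp only [mulB]
    split
    · rw [Finsupp.single_apply, if_neg]
      intro hh
      exact hcne (congrArg Prod.snd hh).symm
    · rfl
  have key : ∀ x y : G, (x ≠ g ∨ y ≠ h) →
      mulB mp cd (h * y⁻¹, mp.rtr y f') (g * x⁻¹, mp.rtr x f) (1, c) = 0 := by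
    intro x y hxy
    simp only [mulB]
    split
    · rename_i hcond
      rw [Finsupp.single_apply, if_neg]
      intro hh
      have hy : y = h := by
        have h1 : h * y⁻¹ = 1 := congrArg Prod.fst hh
        rw [mul_inv_eq_one] at h1; exact h1.symm
      subst hy
      rw [mul_inv_cancel, mp.one_ltl] at hcond
      have hx : x = g := by
        have := hcond.symm
        rw [mul_inv_eq_one] at this; exact this.symm
      rcases hxy with hxy | hxy
      · exact hxy hx
      · exact hxy rfl
    · rfl
  simp only [HL, mul_zero, Finset.sum_const_zero] at H
  rw [Finset.sum_eq_single_of_mem g (Finset.mem_univ g)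
      (fun x _ hx => Finset.sum_eq_zero fun y _ => by rw [key x y (Or.inl hx), mul_zero]),
    Finset.sum_eq_single_of_mem h (Finset.mem_univ h)
      (fun y _ hy => by rw [key g y (Or.inr hy), mul_zero])] at H
  simp only [mul_inv_cancel, cd.one_tau, Units.val_one, one_mul, mul_one, mulB,
    mp.one_ltl, if_pos, cd.one_sig, Finsupp.single_apply] at H
  rw [if_pos (show ((1 : G), mp.rtr h f' * mp.rtr g f) = (1, c) from rfl), mul_one] at H
  exact H.symm
end

section
/- Let G be a finite group, F a group, (F, G, ◁, ▷) a matched pair with ◁ trivial (g ◁ f = g for all g ∈ G, f ∈ F, i.e. the abelian extension is central), σ, τ cocycle data, and let (k^G τ#_σ kF, R) be a coquasitriangular Hopf algebra. Set S = {f ∈ F : g ▷ f = f for all g ∈ G}. Suppose that for every f ∈ F, every simple right comodule over the coalgebra k^{G_f}_{τ_f} is 1-dimensional. Then: (a) σ(g; f, f') = σ(g; f', f) for all g ∈ G and f, f' ∈ S, and (b) S is an abelian subgroup of F (in particular f f' = f' f for all f, f' ∈ S). -/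
open Module in
lemma binom_aux {A : Type*} [Ring A] (N : A) :
    ∀ m : ℕ, ∃ B : A, (1 + N)^m = 1 + m • N + N^2 * B ∧ Commute N B := by
  intro m
  induction m with
  | zero => exact ⟨0, by simp, Commute.zero_right N⟩
  | succ m ih =>
    obtain ⟨B, hB, hc⟩ := ih
    refine ⟨m • 1 + B + B * N, ?_, ?_⟩
    · rw [pow_succ, hB, succ_nsmul]
      simp only [mul_add, add_mul, mul_one, one_mul, smul_mul_assoc, mul_smul_comm, pow_two]
      abel_nf
      noncomm_ring
    · exact (Commute.add_right (Commute.add_right ((Commute.one_right N).smul_right m) hc)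
        (hc.mul_right (Commute.refl N)))

open Module in
lemma nilp_unip {k A : Type*} [Field k] [CharZero k] [Ring A] [Algebra k A] (N : A)
    (hN : IsNilpotent N) {m : ℕ} (hm : 0 < m) (h : (1 + N)^m = 1) : N = 0 := by
  obtain ⟨r, hr⟩ := hN
  induction r using Nat.strong_induction_on generalizing N with
  | _ r ih =>
    match r, hr with
    | 0, hr =>
      have h1 : (1 : A) = 0 := by simpa using hr
      calc N = N * 1 := (mul_one N).symm
        _ = 0 := by rw [h1, mul_zero]
    | 1, hr => simpa using hr
    | (s+2), hr =>
      obtain ⟨B, hB, hc⟩ := binom_aux N m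
      rw [h] at hB
      have h0 : m • N + N^2 * B = 0 := by
        have h' := hB.symm
        rw [add_assoc] at h'
        exact (add_eq_left).1 h'
      have h2 := congrArg (· * N^s) h0
      simp only [add_mul, smul_mul_assoc, zero_mul, mul_assoc] at h2
      rw [← pow_succ', ← (hc.pow_left s).eq, ← mul_assoc, ← pow_add] at h2
      rw [show 2 + s = s + 2 by ring, hr, zero_mul, add_zero] at h2
      have h3 : N^(s+1) = 0 := by
        have hmk : ((m:ℕ):k) ≠ 0 := Nat.cast_ne_zero.2 hm.ne'
        have : ((m:ℕ):k) • N^(s+1) = 0 := by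
          rw [Nat.cast_smul_eq_nsmul]; exact h2
        have := congrArg (fun x => ((m:ℕ):k)⁻¹ • x) this
        simpa [smul_smul, inv_mul_cancel₀ hmk] using this
      exact ih (s+1) (by omega) N h h3


open Module in
private lemma pow_mem_aux {k V : Type*} [Field k] [AddCommGroup V] [Module k V]
    {U : Submodule k V} {N : Module.End k V} (hN : ∀ v ∈ U, N v ∈ U) :
    ∀ (n : ℕ) (v : V), v ∈ U → (N^n) v ∈ U := by
  intro n
  induction n with
  | zero => intro v hv; simpa using hv
  | succ n ih =>
    intro v hv
    rw [pow_succ', Module.End.mul_apply]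
    exact hN _ (ih v hv)

open Module in
lemma nilp_restrict_quot {k V : Type*} [Field k] [AddCommGroup V] [Module k V]
    (U : Submodule k V) (N : Module.End k V) (hN : ∀ v ∈ U, N v ∈ U)
    (h1 : IsNilpotent (N.restrict hN))
    (h2 : IsNilpotent (Submodule.mapQ U U N (fun v hv => hN v hv))) : IsNilpotent N := by
  obtain ⟨a, ha⟩ := h1
  obtain ⟨b, hb⟩ := h2
  refine ⟨a + b, ?_⟩
  ext x
  have hxb : (N^b) x ∈ U := by
    have h3 : U.mkQ ((N^b) x) = 0 := by
      have h4 : U.mapQ U (N^b) (fun v hv => pow_mem_aux hN b v hv) = 0 := by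
        rw [Submodule.mapQ_pow (h := fun v hv => hN v hv), hb]
      have := congrArg (fun φ => φ (Submodule.Quotient.mk x)) h4
      simpa [Submodule.mapQ_apply, Submodule.mkQ_apply] using this
    have := LinearMap.mem_ker.2 h3
    rwa [Submodule.ker_mkQ] at this
  have key : (N^a) ((N^b) x) = 0 := by
    have h5 : (N.restrict hN)^a = (N^a).restrict (fun v hv => pow_mem_aux hN a v hv) :=
      Module.End.pow_restrict a hN
    have := congrArg (fun φ => ((φ (⟨(N^b) x, hxb⟩ : U) : U) : V)) (h5.symm.trans (by rw [ha]))
    simpa [LinearMap.restrict_apply] using this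
  rw [LinearMap.zero_apply, pow_add, Module.End.mul_apply]
  exact key


open Module in
lemma matrix_one_comm {k : Type*} [Field k] {n : ℕ} (hn : n = 1)
    (M N : Matrix (Fin n) (Fin n) k) : M * N = N * M := by
  subst hn
  ext i j
  rw [Matrix.mul_apply, Matrix.mul_apply]
  simp [Fin.sum_univ_one, Subsingleton.elim i 0, Subsingleton.elim j 0, mul_comm]

open Module
section Key
universe v
variable {k : Type*} {G : Type*} [Field k] [Group G]

lemma key_nilpotent (T : G → G → k) (hTne : ∀ a b, T a b ≠ 0)
    (Hsimp : ∀ (n : ℕ) (a : G → Matrix (Fin n) (Fin n) k), a 1 = 1 →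
      (∀ x y, a x * a y = T x y • a (x*y)) → 0 < n →
      (∀ U : Submodule k (Fin n → k), (∀ v ∈ U, ∀ g : G, (a g).mulVec v ∈ U) → U = ⊥ ∨ U = ⊤) →
      n = 1)
    (u w : G) :
    ∀ (d : ℕ) (V : Type v) [AddCommGroup V] [Module k V] [FiniteDimensional k V],
      finrank k V ≤ d → ∀ (A : G → Module.End k V), A 1 = 1 →
      (∀ x y, A x * A y = T x y • A (x*y)) →
      IsNilpotent (((T u w * T (u*w) (w*u)⁻¹) * (T w u * T (w*u) (w*u)⁻¹)⁻¹)
        • A ((u*w)*(w*u)⁻¹) - 1) := by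
  intro d
  induction d with
  | zero =>
    intro V _ _ _ hle A hA1 hAmul
    have : Subsingleton V := Module.finrank_zero_iff.mp (Nat.le_zero.mp hle)
    exact ⟨1, by rw [pow_one]; exact Subsingleton.elim _ _⟩
  | succ d ih =>
    intro V _ _ _ hle A hA1 hAmul
    by_cases hV : finrank k V = 0
    · have : Subsingleton V := Module.finrank_zero_iff.mp hV
      exact ⟨1, by rw [pow_one]; exact Subsingleton.elim _ _⟩
    set μ : k := (T u w * T (u*w) (w*u)⁻¹) * (T w u * T (w*u) (w*u)⁻¹)⁻¹ with hμ
    set e : G := (u*w)*(w*u)⁻¹ with he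
    by_cases hex : ∃ U : Submodule k V, (∀ v ∈ U, ∀ g : G, A g v ∈ U) ∧ U ≠ ⊥ ∧ U ≠ ⊤
    · obtain ⟨U, hU, hUb, hUt⟩ := hex
      set N : Module.End k V := μ • A e - 1 with hN
      have hNU : ∀ v ∈ U, N v ∈ U := by
        intro v hv
        simp only [hN, LinearMap.sub_apply, LinearMap.smul_apply, Module.End.one_apply]
        exact sub_mem (U.smul_mem μ (hU v hv e)) hv
      have hUg : ∀ g : G, ∀ v ∈ U, A g v ∈ U := fun g v hv => hU v hv g
      set A' : G → Module.End k U := fun g => (A g).restrict (hUg g) with hA'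
      have hA'1 : A' 1 = 1 := by
        apply LinearMap.ext; rintro ⟨v, hv⟩
        apply Subtype.ext
        simp [hA', LinearMap.restrict_apply, hA1]
      have hA'mul : ∀ x y, A' x * A' y = T x y • A' (x*y) := by
        intro x y
        apply LinearMap.ext; rintro ⟨v, hv⟩
        apply Subtype.ext
        have h := congrArg (fun φ => φ v) (hAmul x y)
        simp only [Module.End.mul_apply, LinearMap.smul_apply] at h
        simp [hA', LinearMap.restrict_apply, Module.End.mul_apply, h]
      have hrankU : finrank k U ≤ d := by
        have := Submodule.finrank_lt hUt (K := k) (V := V)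
        omega
      have h1 := ih U hrankU A' hA'1 hA'mul
      have hUg' : ∀ g : G, U ≤ U.comap (A g) := fun g v hv => hU v hv g
      set A'' : G → Module.End k (V ⧸ U) := fun g => U.mapQ U (A g) (hUg' g) with hA''
      have hA''1 : A'' 1 = 1 := by
        apply LinearMap.ext; intro xq
        obtain ⟨x, rfl⟩ := Submodule.Quotient.mk_surjective U xq
        simp [hA'', Submodule.mapQ_apply, hA1]
      have hA''mul : ∀ x y, A'' x * A'' y = T x y • A'' (x*y) := by
        intro x y
        apply LinearMap.ext; intro xq
        obtain ⟨v, rfl⟩ := Submodule.Quotient.mk_surjective U xq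
        have h := congrArg (fun φ => φ v) (hAmul x y)
        simp only [Module.End.mul_apply, LinearMap.smul_apply] at h
        simp only [Module.End.mul_apply, LinearMap.smul_apply, hA'', Submodule.mapQ_apply, h,
          Submodule.Quotient.mk_smul]
      have hrankQ : finrank k (V ⧸ U) ≤ d := by
        have h2 := Submodule.finrank_quotient_add_finrank U (R := k) (M := V)
        have h3 : 0 < finrank k U := Submodule.one_le_finrank_iff.mpr hUb
        omega
      have h2 := ih (V ⧸ U) hrankQ A'' hA''1 hA''mul
      apply nilp_restrict_quot U N hNU
      · convert h1 using 1
        apply LinearMap.ext; rintro ⟨v, hv⟩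
        apply Subtype.ext
        simp [hN, hA', LinearMap.restrict_apply]
      · convert h2 using 1
        apply LinearMap.ext; intro xq
        obtain ⟨v, rfl⟩ := Submodule.Quotient.mk_surjective U xq
        simp [hN, hA'', Submodule.mapQ_apply, LinearMap.sub_apply, LinearMap.smul_apply,
          Submodule.Quotient.mk_smul, Submodule.Quotient.mk_sub]
    · push_neg at hex
      set n := finrank k V with hn'
      set b : Basis (Fin n) k V := finBasis k V with hb
      set φ := LinearMap.toMatrixAlgEquiv b with hφ
      set a : G → Matrix (Fin n) (Fin n) k := fun g => φ (A g) with ha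
      have ha1 : a 1 = 1 := by show φ (A 1) = 1; rw [hA1]; exact map_one φ
      have hamul : ∀ x y, a x * a y = T x y • a (x*y) := by
        intro x y
        show φ (A x) * φ (A y) = T x y • φ (A (x*y))
        rw [← map_mul, hAmul, map_smul]
      have htm : ∀ f : Module.End k V, φ f = LinearMap.toMatrix b b f := by
        intro f; ext i j; rw [hφ, LinearMap.toMatrixAlgEquiv_apply, LinearMap.toMatrix_apply]
      have hrel : ∀ (g : G) (v : V), b.equivFun (A g v) = (a g).mulVec (b.equivFun v) := by
        intro g v
        show b.equivFun (A g v) = (φ (A g)).mulVec (b.equivFun v)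
        rw [htm]
        simp only [Basis.equivFun_apply]
        exact (LinearMap.toMatrix_mulVec_repr b b (A g) v).symm
      have hinv : ∀ U' : Submodule k (Fin n → k),
          (∀ v ∈ U', ∀ g : G, (a g).mulVec v ∈ U') → U' = ⊥ ∨ U' = ⊤ := by
        intro U' hU'
        set U : Submodule k V := U'.comap (b.equivFun : V →ₗ[k] (Fin n → k)) with hU
        have hUinv : ∀ v ∈ U, ∀ g : G, A g v ∈ U := by
          intro v hv g
          simp only [hU, Submodule.mem_comap, LinearEquiv.coe_coe] at hv ⊢
          rw [hrel]
          exact hU' _ hv g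
        by_cases hUbot : U = ⊥
        · left
          rw [Submodule.eq_bot_iff]
          intro x hx
          have hmem : b.equivFun.symm x ∈ U := by
            simp only [hU, Submodule.mem_comap, LinearEquiv.coe_coe, LinearEquiv.apply_symm_apply]
            exact hx
          rw [hUbot, Submodule.mem_bot] at hmem
          have hx2 : x = b.equivFun (b.equivFun.symm x) := (b.equivFun.apply_symm_apply x).symm
          rw [hmem, map_zero] at hx2
          exact hx2
        · right
          have hUtop : U = ⊤ := hex U hUinv hUbot
          rw [Submodule.eq_top_iff']
          intro x
          have hmem : b.equivFun.symm x ∈ U := hUtop ▸ Submodule.mem_top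
          simp only [hU, Submodule.mem_comap, LinearEquiv.coe_coe,
            LinearEquiv.apply_symm_apply] at hmem
          exact hmem
      have hn1 : n = 1 := Hsimp n a ha1 hamul (Nat.pos_of_ne_zero hV) hinv
      have hcomm := matrix_one_comm hn1 (a u) (a w)
      rw [hamul, hamul] at hcomm
      have hright := congrArg (fun M => M * a ((w*u)⁻¹)) hcomm
      simp only [Matrix.smul_mul] at hright
      rw [hamul, hamul, mul_inv_cancel, ha1] at hright
      rw [smul_smul, smul_smul] at hright
      have hd : (T w u * T (w*u) (w*u)⁻¹) ≠ 0 := mul_ne_zero (hTne _ _) (hTne _ _)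
      have hae : μ • a e = 1 := by
        have hμ2 : μ = (T w u * T (w*u) (w*u)⁻¹)⁻¹ * (T u w * T (u*w) (w*u)⁻¹) := by
          rw [hμ]; ring
        rw [hμ2, mul_smul, hright, smul_smul, inv_mul_cancel₀ hd, one_smul]
      have hzero : μ • A e - 1 = 0 := by
        apply φ.injective
        rw [map_sub, map_smul, map_one, map_zero]
        show μ • a e - 1 = 0
        rw [hae, sub_self]
      rw [hzero]
      exact ⟨1, by rw [pow_one]⟩
end Key

section CommSimple
variable {k G : Type*} [Field k] [CharZero k] [Group G] [Fintype G] [DecidableEq G]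

lemma comm_of_simple (T : G → G → k) (hT1 : ∀ x, T 1 x = 1) (hT1' : ∀ x, T x 1 = 1)
    (hTc : ∀ x y z, T x y * T (x*y) z = T x (y*z) * T y z) (hTne : ∀ x y, T x y ≠ 0)
    (Hsimp : ∀ (n : ℕ) (a : G → Matrix (Fin n) (Fin n) k), a 1 = 1 →
      (∀ x y, a x * a y = T x y • a (x*y)) → 0 < n →
      (∀ U : Submodule k (Fin n → k), (∀ v ∈ U, ∀ g : G, (a g).mulVec v ∈ U) → U = ⊥ ∨ U = ⊤) →
      n = 1)
    (u w : G) : u*w = w*u ∧ T u w = T w u := by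
  classical
  set ρ : G → Matrix G G k := fun g => Matrix.of (fun z x => if z = g*x then T g x else 0) with hρ
  have hρmul : ∀ x y, ρ x * ρ y = T x y • ρ (x*y) := by
    intro x y
    ext z s
    rw [Matrix.mul_apply]
    simp only [hρ, Matrix.of_apply, Matrix.smul_apply, smul_eq_mul]
    rw [Finset.sum_eq_single (y*s)]
    · rw [if_pos rfl]
      by_cases hz : z = x*(y*s)
      · rw [if_pos hz, if_pos (by rw [mul_assoc]; exact hz), ← hTc x y s]
      · rw [if_neg hz, if_neg (by rw [mul_assoc]; exact hz), mul_zero, zero_mul]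
    · intro t _ ht
      rw [if_neg ht, mul_zero]
    · intro h; exact absurd (Finset.mem_univ _) h
  have hρ1 : ρ 1 = 1 := by
    ext z s
    simp only [hρ, Matrix.of_apply, one_mul, Matrix.one_apply, hT1]
  set A : G → Module.End k (G → k) := fun g => (ρ g).mulVecLin with hA
  have hA1 : A 1 = 1 := by
    show (ρ 1).mulVecLin = 1
    rw [hρ1, Matrix.mulVecLin_one]
    rfl
  have hAmul : ∀ x y, A x * A y = T x y • A (x*y) := by
    intro x y
    show (ρ x).mulVecLin * (ρ y).mulVecLin = T x y • (ρ (x*y)).mulVecLin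
    rw [Module.End.mul_eq_comp, ← Matrix.mulVecLin_mul, hρmul]
    ext v
    simp [Matrix.mulVecLin_apply, Matrix.smul_mulVec]
  set e : G := (u*w)*(w*u)⁻¹ with he
  set μ : k := (T u w * T (u*w) (w*u)⁻¹) * (T w u * T (w*u) (w*u)⁻¹)⁻¹ with hμ
  have hμne : μ ≠ 0 := mul_ne_zero (mul_ne_zero (hTne _ _) (hTne _ _))
    (inv_ne_zero (mul_ne_zero (hTne _ _) (hTne _ _)))
  have hnilp : IsNilpotent (μ • A e - 1) :=
    key_nilpotent T hTne Hsimp u w (finrank k (G → k)) (G → k) le_rfl A hA1 hAmul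
  set N : Module.End k (G → k) := μ • A e - 1 with hN
  have hpow : ∀ (m : ℕ) (g : G), ∃ s : k, s ≠ 0 ∧ (A g)^m = s • A (g^m) := by
    intro m g
    induction m with
    | zero => exact ⟨1, one_ne_zero, by rw [pow_zero, pow_zero, hA1, one_smul]⟩
    | succ m ih =>
      obtain ⟨s, hs, hsm⟩ := ih
      refine ⟨s * T (g^m) g, mul_ne_zero hs (hTne _ _), ?_⟩
      rw [pow_succ, hsm, smul_mul_assoc, hAmul, smul_smul, pow_succ]
  set m : ℕ := Fintype.card G with hm
  have hm0 : 0 < m := Fintype.card_pos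
  obtain ⟨s, hs, hsm⟩ := hpow m e
  have hem : e^m = 1 := pow_card_eq_one
  rw [hem, hA1] at hsm
  have hz : (1 + N)^m = (μ^m * s) • 1 := by
    have h1 : (1 : Module.End k (G → k)) + N = μ • A e := by rw [hN, add_sub_cancel]
    rw [h1, smul_pow, hsm, smul_smul]
  obtain ⟨B, hB, hcB⟩ := binom_aux N m
  obtain ⟨r, hr⟩ := id hnilp
  have hnilp2 : IsNilpotent ((μ^m * s) • (1 : Module.End k (G → k)) - 1) := by
    rw [← hz, hB]
    have h2 : (1 : Module.End k (G → k)) + m • N + N^2*B - 1 = m • N + N^2*B := by abel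
    rw [h2, nsmul_eq_mul]
    have cN : Commute N (N^2*B) := ((Commute.refl N).pow_right 2).mul_right hcB
    have c1 : Commute ((m : Module.End k (G → k)) * N) (N^2*B) :=
      Commute.mul_left (Nat.cast_commute m (N^2*B)) cN
    have n1 : IsNilpotent ((m : Module.End k (G → k)) * N) :=
      Commute.isNilpotent_mul_left (Nat.cast_commute m N) ⟨r, hr⟩
    have n2sq : IsNilpotent (N^2) := by
      refine ⟨r, ?_⟩
      rw [← pow_mul, mul_comm 2 r, pow_mul, hr]
      exact zero_pow two_ne_zero
    have n2 : IsNilpotent (N^2*B) := Commute.isNilpotent_mul_right (hcB.pow_left 2) n2sq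
    exact Commute.isNilpotent_add c1 n1 n2
  set v1 : G → k := Pi.single (1:G) (1:k) with hv1
  have hc1 : μ^m * s = 1 := by
    obtain ⟨r2, hr2⟩ := hnilp2
    have hx : ((μ^m*s - 1) • (1 : Module.End k (G → k)))^r2 = 0 := by
      rw [sub_smul (μ^m*s) 1 (1 : Module.End k (G → k)), one_smul]; exact hr2
    have h3 : ((μ^m*s - 1)^r2) • (1 : Module.End k (G → k)) = 0 := by
      rw [smul_pow, one_pow] at hx; exact hx
    have h4 := congrFun (congrArg (fun φ => φ v1) h3) 1
    simp only [LinearMap.smul_apply, Module.End.one_apply, LinearMap.zero_apply, Pi.smul_apply,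
      Pi.zero_apply, smul_eq_mul, hv1, Pi.single_eq_same, mul_one] at h4
    rcases Nat.eq_zero_or_pos r2 with h | h
    · rw [h, pow_zero] at h4; exact absurd h4 one_ne_zero
    · have h5 : μ^m*s - 1 = 0 := pow_eq_zero_iff h.ne' |>.mp h4
      have := sub_eq_zero.mp h5
      exact this
  rw [hc1, one_smul] at hz
  have hN0 : N = 0 := nilp_unip (k := k) N hnilp hm0 hz
  have hAe : μ • A e = 1 := by
    have := hN0
    rw [hN, sub_eq_zero] at this
    exact this
  have heval := congrFun (congrArg (fun φ => φ v1) hAe) e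
  simp only [LinearMap.smul_apply, Module.End.one_apply, Pi.smul_apply, smul_eq_mul] at heval
  have hAev : (A e) v1 e = 1 := by
    show ((ρ e).mulVecLin v1) e = 1
    rw [Matrix.mulVecLin_apply, hv1, Matrix.mulVec_single]
    simp [hρ, Matrix.of_apply, hT1']
  rw [hAev, mul_one, hv1] at heval
  rw [Pi.single_apply] at heval
  by_cases he1 : e = 1
  · have huw : u*w = w*u := by
      rw [he] at he1
      exact mul_inv_eq_one.mp he1
    refine ⟨huw, ?_⟩
    rw [if_pos he1] at heval
    rw [hμ, huw] at heval
    have hC : T (w*u) (w*u)⁻¹ ≠ 0 := hTne _ _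
    have := (mul_inv_eq_one₀ (mul_ne_zero (hTne w u) hC)).mp heval
    exact mul_right_cancel₀ hC this
  · rw [if_neg he1] at heval
    exact absurd heval hμne
end CommSimple

section QcommEval
variable {k F G : Type*} [Field k] [Group F] [Group G] [Fintype G] [DecidableEq G]

lemma qcomm_eval_ne (mp : MatchedPair F G) (cd : CocycleData k F G mp)
    (hltl : ∀ (x : G) (u : F), mp.ltl x u = x)
    (R : G → F → G → F → k) (hR : IsCQT mp cd R) {f f' : F}
    (hf : ∀ x : G, mp.rtr x f = f) (hf' : ∀ x : G, mp.rtr x f' = f')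
    (hc : f' * f ≠ f * f') (g h x₀ : G) :
    ((cd.tau (g*x₀⁻¹) x₀ f : kˣ) : k) * ((cd.tau (h*x₀⁻¹) x₀ f' : kˣ) : k)
      * R (g*x₀⁻¹) f (h*x₀⁻¹) f' * ((cd.sig x₀ f f' : kˣ) : k) = 0 := by
  classical
  have hq := hR.qcomm g h f f'
  have hq2 := DFunLike.congr_fun hq (x₀, f*f')
  simp only [Finsupp.finset_sum_apply, Finsupp.smul_apply, mulB, hltl, hf, hf'] at hq2
  simp only [apply_ite (fun (Φ : (G × F) →₀ k) => Φ (x₀, f*f')), Finsupp.single_apply,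
    Finsupp.coe_zero, Pi.zero_apply, Prod.mk.injEq, smul_eq_mul, mul_ite, mul_zero,
    and_true, eq_self_iff_true, if_true] at hq2
  simp only [Finset.sum_ite_eq, Finset.sum_ite_eq', Finset.mem_univ, if_true] at hq2
  rw [hq2]
  apply Finset.sum_eq_zero
  intro x _
  apply Finset.sum_eq_zero
  intro y _
  by_cases h1 : h*y⁻¹ = g*x⁻¹
  · rw [if_pos h1, if_neg]
    rintro ⟨-, h3⟩
    exact hc h3
  · rw [if_neg h1]

lemma qcomm_eval_eq (mp : MatchedPair F G) (cd : CocycleData k F G mp)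
    (hltl : ∀ (x : G) (u : F), mp.ltl x u = x)
    (R : G → F → G → F → k) (hR : IsCQT mp cd R) {f f' : F}
    (hf : ∀ x : G, mp.rtr x f = f) (hf' : ∀ x : G, mp.rtr x f' = f')
    (hc : f' * f = f * f') (g h x₀ : G) :
    ((cd.tau (g*x₀⁻¹) x₀ f : kˣ) : k) * ((cd.tau (h*x₀⁻¹) x₀ f' : kˣ) : k)
      * R (g*x₀⁻¹) f (h*x₀⁻¹) f' * ((cd.sig x₀ f f' : kˣ) : k)
    = ((cd.tau (g*(x₀⁻¹*g)⁻¹) (x₀⁻¹*g) f : kˣ) : k)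
        * ((cd.tau (h*(x₀⁻¹*h)⁻¹) (x₀⁻¹*h) f' : kˣ) : k)
        * R (x₀⁻¹*g) f (x₀⁻¹*h) f' * ((cd.sig x₀ f' f : kˣ) : k) := by
  classical
  have hq := hR.qcomm g h f f'
  have hq2 := DFunLike.congr_fun hq (x₀, f*f')
  simp only [Finsupp.finset_sum_apply, Finsupp.smul_apply, mulB, hltl, hf, hf'] at hq2
  simp only [apply_ite (fun (Φ : (G × F) →₀ k) => Φ (x₀, f*f')), Finsupp.single_apply,
    Finsupp.coe_zero, Pi.zero_apply, Prod.mk.injEq, smul_eq_mul, mul_ite, mul_zero,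
    and_true, eq_self_iff_true, if_true] at hq2
  simp only [Finset.sum_ite_eq, Finset.sum_ite_eq', Finset.mem_univ, if_true] at hq2
  rw [hq2]
  rw [Finset.sum_eq_single (x₀⁻¹*g)]
  · rw [Finset.sum_eq_single (x₀⁻¹*h)]
    · have e1 : g*(x₀⁻¹*g)⁻¹ = x₀ := by group
      have e2 : h*(x₀⁻¹*h)⁻¹ = x₀ := by group
      rw [if_pos (by rw [e1, e2]), if_pos ⟨e2, hc⟩, e2]
    · intro y _ hy
      by_cases h1 : h*y⁻¹ = g*(x₀⁻¹*g)⁻¹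
      · rw [if_pos h1, if_neg]
        rintro ⟨h2, -⟩
        apply hy
        have e1 : g*(x₀⁻¹*g)⁻¹ = x₀ := by group
        rw [e1] at h1
        have : y⁻¹ = h⁻¹ * x₀ := by rw [← h1]; group
        rw [← inv_inv y, this]; group
      · rw [if_neg h1]
    · intro hmem; exact absurd (Finset.mem_univ _) hmem
  · intro x _ hx
    apply Finset.sum_eq_zero
    intro y _
    by_cases h1 : h*y⁻¹ = g*x⁻¹
    · rw [if_pos h1, if_neg]
      rintro ⟨h2, -⟩
      apply hx
      rw [h2] at h1
      have : x⁻¹ = g⁻¹ * x₀ := by rw [h1]; group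
      rw [← inv_inv x, this]; group
    · rw [if_neg h1]
  · intro hmem; exact absurd (Finset.mem_univ _) hmem
end QcommEval

/-- Let `(k^G τ#_σ kF, R)` be coquasitriangular with the extension central
(`g ◁ f = g`), let `S = {f ∈ F : g ▷ f = f for all g ∈ G}`, and suppose that for every
`f ∈ F` every simple right comodule over the coalgebra `k^{G_f}_{τ_f}` (encoded by its
coaction matrices `a : G → Matrix (Fin n) (Fin n) k`, satisfying the comodule axioms on
`G_f` and having no nontrivial invariant subspace) is 1-dimensional. Then
(a) `σ(g; f, f') = σ(g; f', f)` for all `g ∈ G` and `f, f' ∈ S`, and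
(b) `S` is an abelian subgroup of `F`. -/
theorem sigma_symm_and_S_abelian_of_cqt {k F G : Type*} [Field k] [IsAlgClosed k]
    [CharZero k] [Group F] [Group G] [Fintype G] [DecidableEq G]
    (mp : MatchedPair F G) (cd : CocycleData k F G mp)
    (hltl : ∀ (x : G) (u : F), mp.ltl x u = x)
    (R : G → F → G → F → k) (hR : IsCQT mp cd R)
    (hsimple1dim : ∀ (f : F) (n : ℕ) (a : G → Matrix (Fin n) (Fin n) k),
      a 1 = 1 →
      (∀ u w : G, mp.rtr u f = f → mp.rtr w f = f →
        a u * a w = ((cd.tau u w f : kˣ) : k) • a (u * w)) →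
      0 < n →
      (∀ U : Submodule k (Fin n → k),
        (∀ v ∈ U, ∀ u : G, mp.rtr u f = f → (a u).mulVec v ∈ U) → U = ⊥ ∨ U = ⊤) →
      n = 1) :
    (∀ (g : G) (f f' : F), (∀ x : G, mp.rtr x f = f) → (∀ x : G, mp.rtr x f' = f') →
        cd.sig g f f' = cd.sig g f' f) ∧
      (∃ S : Subgroup F, (S : Set F) = {f : F | ∀ x : G, mp.rtr x f = f} ∧
        ∀ a ∈ S, ∀ b ∈ S, a * b = b * a) := by
  classical
  -- basic facts about the actions
  have hrtr_one : ∀ x : G, mp.rtr x 1 = 1 := by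
    intro x
    have h := mp.rtr_mul x 1 1
    rw [one_mul, mp.ltl_one] at h
    exact (left_eq_mul.mp h)
  have hSmul : ∀ {a b : F}, (∀ x, mp.rtr x a = a) → (∀ x, mp.rtr x b = b) →
      ∀ x, mp.rtr x (a*b) = a*b := by
    intro a b ha hb x
    rw [mp.rtr_mul, ha, hltl, hb]
  have hSinv : ∀ {a : F}, (∀ x, mp.rtr x a = a) → ∀ x, mp.rtr x a⁻¹ = a⁻¹ := by
    intro a ha x
    have h := mp.rtr_mul x a⁻¹ a
    rw [inv_mul_cancel, hrtr_one, hltl, ha] at h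
    exact eq_inv_of_mul_eq_one_left h.symm
  -- commutativity and tau-symmetry from the simple-comodule hypothesis
  have hML : ∀ f : F, (∀ x : G, mp.rtr x f = f) → ∀ u w : G, u*w = w*u ∧
      ((cd.tau u w f : kˣ) : k) = ((cd.tau w u f : kˣ) : k) := by
    intro f hf u w
    apply comm_of_simple (T := fun u w => ((cd.tau u w f : kˣ) : k))
    · intro x; rw [cd.one_tau]; simp
    · intro x; rw [cd.tau_one]; simp
    · intro x y z
      have h := cd.tau_cocycle x y z f
      rw [hf] at h
      exact_mod_cast congrArg (fun (u : kˣ) => (u : k)) h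
    · intro x y; exact Units.ne_zero _
    · intro n a ha1 hamul hn hinv
      exact hsimple1dim f n a ha1 (fun u' w' _ _ => hamul u' w') hn
        (fun U hU => hinv U (fun v hv u' => hU v hv u' (hf u')))
  have habel : ∀ u w : G, u*w = w*u := fun u w => (hML 1 (fun x => hrtr_one x) u w).1
  -- nonvanishing of R on S × S from convolution invertibility
  have hnz : ∀ f f' : F, (∀ x : G, mp.rtr x f = f) → (∀ x : G, mp.rtr x f' = f') →
      ∃ u v : G, R u f v f' ≠ 0 := by
    intro f f' hf hf'
    by_contra hno
    push_neg at hno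
    obtain ⟨R', hR'1, _⟩ := hR.conv_inv
    have h := hR'1 1 1 f f'
    simp only [hf, hf'] at h
    rw [Finset.sum_eq_zero (fun x _ => Finset.sum_eq_zero
      (fun y _ => by rw [hno, mul_zero, zero_mul]))] at h
    simp at h
  -- S is "commutative"
  have hcomm : ∀ f f' : F, (∀ x : G, mp.rtr x f = f) → (∀ x : G, mp.rtr x f' = f') →
      f * f' = f' * f := by
    intro f f' hf hf'
    by_contra hne
    have hvanish : ∀ u v : G, R u f v f' = 0 := by
      intro u v
      have h := qcomm_eval_ne mp cd hltl R hR hf hf' (fun hh => hne hh.symm) u v 1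
      simp only [inv_one, mul_one, cd.tau_one, cd.one_sig, Units.val_one, one_mul] at h
      exact h
    obtain ⟨u, v, h⟩ := hnz f f' hf hf'
    exact h (hvanish u v)
  -- sigma symmetry
  have hsig : ∀ (g : G) (f f' : F), (∀ x : G, mp.rtr x f = f) → (∀ x : G, mp.rtr x f' = f') →
      cd.sig g f f' = cd.sig g f' f := by
    intro g f f' hf hf'
    obtain ⟨u, v, hRuv⟩ := hnz f f' hf hf'
    have hc : f' * f = f * f' := (hcomm f f' hf hf').symm
    have h := qcomm_eval_eq mp cd hltl R hR hf hf' hc (u*g) (v*g) g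
    have e3 : g⁻¹*(u*g) = u := by rw [habel u g]; group
    have e4 : g⁻¹*(v*g) = v := by rw [habel v g]; group
    rw [mul_inv_cancel_right, mul_inv_cancel_right, e3, e4] at h
    have e5 : (u*g)*u⁻¹ = g := by rw [habel u g]; group
    have e6 : (v*g)*v⁻¹ = g := by rw [habel v g]; group
    rw [e5, e6] at h
    rw [(hML f hf u g).2, (hML f' hf' v g).2] at h
    have hX : ((cd.tau g u f : kˣ) : k) * ((cd.tau g v f' : kˣ) : k) * R u f v f' ≠ 0 :=
      mul_ne_zero (mul_ne_zero (Units.ne_zero _) (Units.ne_zero _)) hRuv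
    have hfinal : ((cd.sig g f f' : kˣ) : k) = ((cd.sig g f' f : kˣ) : k) :=
      mul_left_cancel₀ hX h
    exact Units.ext hfinal
  refine ⟨fun g f f' hf hf' => hsig g f f' hf hf', ?_⟩
  refine ⟨{ carrier := {f : F | ∀ x : G, mp.rtr x f = f},
            mul_mem' := fun ha hb => hSmul ha hb,
            one_mem' := fun x => hrtr_one x,
            inv_mem' := fun ha => hSinv ha }, rfl, ?_⟩
  intro a ha b hb
  exact hcomm a b ha hb
end

section
/- Let G = Z₂ = {1, g}, F a group, (F, Z₂, ◁, ▷) a matched pair (so ◁ is trivial), σ, τ cocycle data, and let (k^{Z₂} τ#_σ kF, R) be a coquasitriangular Hopf algebra. Then exactly one of the following two cases holds: (1) R(p_1#1, p_1#1) = R(p_1#1, p_g#1) = R(p_g#1, p_1#1) = 1/2 and R(p_g#1, p_g#1) = −1/2; or (2) R(p_1#1, p_1#1) = 1 and R(p_1#1, p_g#1) = R(p_g#1, p_1#1) = R(p_g#1, p_g#1) = 0. -/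
/-- Let `G = Z₂ = {1, g}` (a group of order 2 with `g` its non-identity element) and
let `(k^{Z₂} τ#_σ kF, R)` be coquasitriangular. Then exactly one of the following
holds: (1) `R(p_1#1, p_1#1) = R(p_1#1, p_g#1) = R(p_g#1, p_1#1) = 1/2` and
`R(p_g#1, p_g#1) = -1/2`; or (2) `R(p_1#1, p_1#1) = 1` and
`R(p_1#1, p_g#1) = R(p_g#1, p_1#1) = R(p_g#1, p_g#1) = 0`. -/
theorem R_on_units_of_Z2 {k F G : Type*} [Field k] [IsAlgClosed k] [CharZero k]
    [Group F] [Group G] [Fintype G] [DecidableEq G]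
    (hG : Fintype.card G = 2) (g : G) (hg : g ≠ 1)
    (mp : MatchedPair F G) (cd : CocycleData k F G mp)
    (R : G → F → G → F → k) (hR : IsCQT mp cd R) :
    Xor'
      (R 1 1 1 1 = 1 / 2 ∧ R 1 1 g 1 = 1 / 2 ∧ R g 1 1 1 = 1 / 2 ∧
        R g 1 g 1 = -(1 / 2))
      (R 1 1 1 1 = 1 ∧ R 1 1 g 1 = 0 ∧ R g 1 1 1 = 0 ∧ R g 1 g 1 = 0) := by
  -- Basic facts about the group `G` of order 2
  have huniv : (Finset.univ : Finset G) = {1, g} := by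
    symm
    apply Finset.eq_univ_of_card
    rw [Finset.card_pair (Ne.symm hg), hG]
  have hmem : ∀ x : G, x = 1 ∨ x = g := by
    intro x
    have hx := Finset.mem_univ x
    rw [huniv] at hx
    simpa using hx
  have hgg : g * g = 1 := by
    rcases hmem (g * g) with h | h
    · exact h
    · exact absurd (mul_right_cancel (h.trans (one_mul g).symm)) hg
  have hginv : g⁻¹ = g := inv_eq_of_mul_eq_one_right hgg
  have hsum : ∀ φ : G → k, ∑ x : G, φ x = φ 1 + φ g := by
    intro φ
    rw [huniv, Finset.sum_pair (Ne.symm hg)]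
  have hrtr1 : ∀ x : G, mp.rtr x 1 = 1 := by
    intro x
    have h := mp.rtr_mul x 1 1
    rw [mul_one, mp.ltl_one] at h
    exact (left_eq_mul.mp h)
  -- The two structure equations on group-likes
  have E1 : ∀ g' h l : G, (if h = l then (1 : k) else 0) * R g' 1 h 1
      = R g' 1 l 1 * R 1 1 h 1 + R (g' * g) 1 l 1 * R g 1 h 1 := by
    intro g' h l
    have h1 := hR.cqt1 g' h l 1 1 1
    rw [hsum] at h1
    simpa [mp.ltl_one, cd.sig_one_left, cd.tau_one_right, hrtr1, hginv] using h1
  have E2 : ∀ g' h l : G, (if g' = h then (1 : k) else 0) * R g' 1 l 1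
      = R g' 1 l 1 * R h 1 1 1 + R g' 1 (l * g) 1 * R h 1 g 1 := by
    intro g' h l
    have h1 := hR.cqt2 g' h l 1 1 1
    rw [hsum] at h1
    simpa [mp.ltl_one, cd.sig_one_left, cd.tau_one_right, hrtr1, hginv] using h1
  have h1g : (1 : G) ≠ g := Ne.symm hg
  -- the eight relevant instances
  have e1 := E1 1 1 1; simp only [if_pos rfl, if_true, one_mul, hgg] at e1
  have e2 := E1 1 1 g; simp only [if_neg h1g, one_mul, zero_mul, hgg] at e2
  have e3 := E1 1 g 1; simp only [if_neg hg, one_mul, zero_mul, hgg] at e3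
  have e4 := E1 1 g g; simp only [if_pos rfl, if_true, one_mul, hgg] at e4
  have e6 := E1 g 1 g; simp only [if_neg h1g, one_mul, zero_mul, hgg] at e6
  have e8 := E1 g g g; simp only [if_pos rfl, if_true, one_mul, hgg] at e8
  have f1 := E2 1 1 1; simp only [if_pos rfl, if_true, one_mul, hgg] at f1
  have f2 := E2 1 1 g; simp only [if_pos rfl, if_true, one_mul, hgg] at f2
  have f6 := E2 g g g; simp only [if_pos rfl, if_true, one_mul, hgg] at f6
  have h12 : (1 : k) / 2 ≠ 1 := by norm_num
  by_cases hb : R 1 1 g 1 = 0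
  · -- case (2)
    have hc : R g 1 1 1 = 0 := by
      have hcc : R g 1 1 1 * R g 1 1 1 = 0 := by linear_combination f1 - e1 + R 1 1 g 1 * hb
      exact mul_self_eq_zero.mp hcc
    have hd : R g 1 g 1 = 0 := by
      have hdd : R g 1 g 1 * R g 1 g 1 = 0 := by linear_combination -e4 + (1 - R 1 1 g 1) * hb
      exact mul_self_eq_zero.mp hdd
    have ha : R 1 1 1 1 = 1 := by
      have haa : R 1 1 1 1 * (R 1 1 1 1 - 1) = 0 := by
        linear_combination -e1 - R g 1 1 1 * hc
      rcases mul_eq_zero.mp haa with h0 | h0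
      · -- R ≡ 0 on group-likes contradicts convolution invertibility
        exfalso
        obtain ⟨R', hR'1, -⟩ := hR.conv_inv
        have hone := hR'1 1 1 1 1
        rw [hsum] at hone
        simp only [hsum] at hone
        simp [cd.tau_one_right, hrtr1, hginv, h0, hb, hc, hd] at hone
      · linear_combination h0
    refine Or.inr ⟨⟨ha, hb, hc, hd⟩, fun h => ?_⟩
    rw [ha] at h
    exact h12 h.1.symm
  · -- case (1)
    have haa : R 1 1 1 1 + R 1 1 1 1 = 1 := by
      rcases mul_eq_zero.mp (show R 1 1 g 1 * (R 1 1 1 1 + R 1 1 1 1 - 1) = 0 by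
        linear_combination -f2) with h0 | h0
      · exact absurd h0 hb
      · linear_combination h0
    have ha : R 1 1 1 1 = 1 / 2 := by
      field_simp
      linear_combination haa
    have hcc : R g 1 1 1 * R g 1 1 1 = 1 / 4 := by
      linear_combination -e1 - (R 1 1 1 1 - 1 / 2) * ha
    have hc : R g 1 1 1 ≠ 0 := by
      intro h0
      rw [h0, mul_zero] at hcc
      norm_num at hcc
    have hd : R g 1 g 1 = -(R 1 1 g 1 * R g 1 1 1 + R 1 1 g 1 * R g 1 1 1) := by
      linear_combination -2 * e6 - R g 1 g 1 * haa
    have hdne : R g 1 g 1 ≠ 0 := by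
      rw [hd]
      intro h0
      have h2 : (2 : k) * (R 1 1 g 1 * R g 1 1 1) = 0 := by linear_combination -h0
      rcases mul_eq_zero.mp h2 with h3 | h3
      · norm_num at h3
      · exact (mul_ne_zero hb hc) h3
    have hbb : R 1 1 g 1 = 1 / 2 := by
      rcases mul_eq_zero.mp (show R g 1 g 1 * (1 - (R 1 1 g 1 + R 1 1 g 1)) = 0 by
        linear_combination e8) with h0 | h0
      · exact absurd h0 hdne
      · field_simp
        linear_combination -h0
    have hcc2 : R g 1 1 1 = 1 / 2 := by
      rcases mul_eq_zero.mp (show R g 1 g 1 * (1 - (R g 1 1 1 + R g 1 1 1)) = 0 by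
        linear_combination f6) with h0 | h0
      · exact absurd h0 hdne
      · field_simp
        linear_combination -h0
    have hdd : R g 1 g 1 = -(1 / 2) := by
      rw [hd, hbb, hcc2]
      norm_num
    refine Or.inl ⟨⟨ha, hbb, hcc2, hdd⟩, fun h => ?_⟩
    rw [ha] at h
    exact h12 h.1
end

section
/- Let G = Z₂ = {1, g}, F an abelian group, (F, Z₂, ◁, ▷) a matched pair (so ◁ is trivial), σ, τ cocycle data, and let (k^{Z₂} τ#_σ kF, R) be a coquasitriangular Hopf algebra. Set S = {f ∈ F : g ▷ f = f} and T = {f ∈ F : g ▷ f ≠ f}, and assume T ≠ ∅. Then: (1) R(p_g # f, p_1 # f') = R(p_1 # f, p_g # f') = R(p_g # f, p_g # f') = 0 for all f, f' ∈ S; (2) R(p_1 # f, p_1 # f') · R(p_g # f, p_g # f'') = 0 for all f' ∈ F and f, f'' ∈ T; (3) R(p_1 # f, p_1 # f') · R(p_g # f'', p_g # f') = 0 for all f ∈ F and f', f'' ∈ T. -/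
/-- Let `G = Z₂ = {1, g}`, `F` abelian, `(k^{Z₂} τ#_σ kF, R)` coquasitriangular, and
set `S = {f : g ▷ f = f}`, `T = {f : g ▷ f ≠ f}`, with `T ≠ ∅`. Then:
(1) `R(p_g#f, p_1#f') = R(p_1#f, p_g#f') = R(p_g#f, p_g#f') = 0` for all `f, f' ∈ S`;
(2) `R(p_1#f, p_1#f') · R(p_g#f, p_g#f'') = 0` for all `f' ∈ F` and `f, f'' ∈ T`;
(3) `R(p_1#f, p_1#f') · R(p_g#f'', p_g#f') = 0` for all `f ∈ F` and `f', f'' ∈ T`. -/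
theorem R_vanishing_of_Z2_abelian {k F G : Type*} [Field k] [IsAlgClosed k]
    [CharZero k] [CommGroup F] [Group G] [Fintype G] [DecidableEq G]
    (hG : Fintype.card G = 2) (g : G) (hg : g ≠ 1)
    (mp : MatchedPair F G) (cd : CocycleData k F G mp)
    (R : G → F → G → F → k) (hR : IsCQT mp cd R)
    (hT : ∃ t : F, mp.rtr g t ≠ t) :
    (∀ f f' : F, mp.rtr g f = f → mp.rtr g f' = f' →
        R g f 1 f' = 0 ∧ R 1 f g f' = 0 ∧ R g f g f' = 0) ∧
      (∀ f f' f'' : F, mp.rtr g f ≠ f → mp.rtr g f'' ≠ f'' →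
        R 1 f 1 f' * R g f g f'' = 0) ∧
      (∀ f f' f'' : F, mp.rtr g f' ≠ f' → mp.rtr g f'' ≠ f'' →
        R 1 f 1 f' * R g f'' g f' = 0) := by
  have hne1g : (1 : G) ≠ g := Ne.symm hg
  have hcard : ({1, g} : Finset G).card = 2 := by
    rw [Finset.card_insert_of_notMem (Finset.notMem_singleton.mpr hne1g), Finset.card_singleton]
  have huniv : ({1, g} : Finset G) = Finset.univ :=
    Finset.eq_of_subset_of_card_le (Finset.subset_univ _)
      (by rw [hcard, Finset.card_univ, hG])
  have hcases : ∀ x : G, x = 1 ∨ x = g := by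
    intro x
    have hx : x ∈ ({1, g} : Finset G) := huniv ▸ Finset.mem_univ x
    simpa using hx
  have hgg : g * g = 1 := by
    rcases hcases (g * g) with h | h
    · exact h
    · exact absurd (mul_eq_right.mp h) hg
  have ginv : g⁻¹ = g := inv_eq_of_mul_eq_one_right hgg
  have hsum : ∀ (Fn : G → k), (∑ x : G, Fn x) = Fn 1 + Fn g := by
    intro Fn
    rw [← huniv, Finset.sum_insert (Finset.notMem_singleton.mpr hne1g), Finset.sum_singleton]
  have hsumF : ∀ (Fn : G → ((G × F) →₀ k)), (∑ x : G, Fn x) = Fn 1 + Fn g := by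
    intro Fn
    rw [← huniv, Finset.sum_insert (Finset.notMem_singleton.mpr hne1g), Finset.sum_singleton]
  have hltl1 : ∀ f : F, mp.ltl 1 f = 1 := by
    intro f
    have h := mp.mul_ltl 1 1 f
    rw [one_mul, mp.one_rtr] at h
    exact mul_eq_right.mp h.symm
  have hltlg : ∀ f : F, mp.ltl g f = g := by
    intro f
    rcases hcases (mp.ltl g f) with h | h
    · exfalso
      have h2 := mp.ltl_mul g f f⁻¹
      rw [mul_inv_cancel, mp.ltl_one, h, hltl1] at h2
      exact hg h2
    · exact h
  have hltl : ∀ (x : G) (f : F), mp.ltl x f = x := by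
    intro x f
    rcases hcases x with h | h <;> subst h
    · exact hltl1 f
    · exact hltlg f
  have hrgg : ∀ f : F, mp.rtr g (mp.rtr g f) = f := by
    intro f
    have h := mp.mul_rtr g g f
    rw [hgg, mp.one_rtr] at h
    exact h.symm
  have hrmul : ∀ f f' : F, mp.rtr g (f * f') = mp.rtr g f * mp.rtr g f' := by
    intro f f'
    rw [mp.rtr_mul, hltlg]
  have hrone : mp.rtr g 1 = 1 := by
    have h := hrmul 1 1
    rw [one_mul] at h
    exact mul_eq_right.mp h.symm
  have hrinv : ∀ f : F, mp.rtr g f⁻¹ = (mp.rtr g f)⁻¹ := by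
    intro f
    have h := hrmul f f⁻¹
    rw [mul_inv_cancel, hrone] at h
    exact (inv_eq_of_mul_eq_one_right h.symm).symm
  -- u0 : R(p_1#f, p_g#f') = 0 when f' ∈ T
  have u0 : ∀ f f' : F, mp.rtr g f' ≠ f' → R 1 f g f' = 0 := by
    intro f f' hf'
    have hne : ¬ (mp.rtr g f' * f = f * f') := by
      intro h
      apply hf'
      have h2 : mp.rtr g f' * f = f' * f := by rw [h, mul_comm]
      exact mul_right_cancel h2
    have h := hR.qcomm 1 g f f'
    simp only [hsumF] at h
    have h2 := DFunLike.congr_fun h (1, f * f')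
    simp [mulB, hltl, ginv, hgg, mp.one_rtr, cd.one_tau, cd.tau_one, cd.one_sig, hg, hne1g, hne,
      Finsupp.single_apply] at h2
    exact h2
  -- v0 : R(p_g#f, p_1#f') = 0 when f ∈ T
  have v0 : ∀ f f' : F, mp.rtr g f ≠ f → R g f 1 f' = 0 := by
    intro f f' hf
    have hne : ¬ (f' * mp.rtr g f = f * f') := by
      intro h
      apply hf
      have h2 : f' * mp.rtr g f = f' * f := by rw [h, mul_comm]
      exact mul_left_cancel h2
    have h := hR.qcomm g 1 f f'
    simp only [hsumF] at h
    have h2 := DFunLike.congr_fun h (1, f * f')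
    simp [mulB, hltl, ginv, hgg, mp.one_rtr, cd.one_tau, cd.tau_one, cd.one_sig, hg, hne1g, hne,
      Finsupp.single_apply] at h2
    exact h2
  -- wA : R(p_g#f, p_g#f') = 0 when (g▷f')(g▷f) ≠ f f'
  have wA : ∀ f f' : F, mp.rtr g f' * mp.rtr g f ≠ f * f' → R g f g f' = 0 := by
    intro f f' hne
    have h := hR.qcomm g g f f'
    simp only [hsumF] at h
    have h2 := DFunLike.congr_fun h (1, f * f')
    simp [mulB, hltl, ginv, hgg, mp.one_rtr, cd.one_tau, cd.tau_one, cd.one_sig, hg, hne1g, hne,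
      Finsupp.single_apply] at h2
    exact h2
  have C4 : ∀ f f' f'' : F, ((cd.sig g f f' : kˣ) : k) * R g (f*f') g f''
      = R g f g f'' * R g f' 1 f'' + R g f 1 (mp.rtr g f'') * R g f' g f'' := by
    intro f f' f''
    have h := hR.cqt2 g g g f f' f''
    rw [hsum] at h
    simp only [hltl, ginv, hgg, inv_one, mul_one, one_mul, if_true, cd.tau_one, cd.one_tau,
      Units.val_one, mp.one_rtr] at h
    linear_combination h
  have C3 : ∀ f f' f'' : F, ((cd.sig g f f' : kˣ) : k) * R g (f*f') 1 f''
      = R g f 1 f'' * R g f' 1 f''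
        + ((cd.tau g g f'' : kˣ) : k) * R g f g (mp.rtr g f'') * R g f' g f'' := by
    intro f f' f''
    have h := hR.cqt2 g g 1 f f' f''
    rw [hsum] at h
    simp only [hltl, ginv, hgg, inv_one, mul_one, one_mul, if_true, cd.tau_one, cd.one_tau,
      Units.val_one, mp.one_rtr] at h
    linear_combination h
  have D2 : ∀ f f' f'' : F, ((cd.sig g f' f'' : kˣ) : k) * R 1 f g (f'*f'')
      = R 1 f g f'' * R 1 f g f'
        + ((cd.tau g g f : kˣ) : k) * R g (mp.rtr g f) g f'' * R g f g f' := by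
    intro f f' f''
    have h := hR.cqt1 1 g g f f' f''
    rw [hsum] at h
    simp only [hltl, ginv, hgg, inv_one, mul_one, one_mul, if_true, cd.tau_one, cd.one_tau,
      Units.val_one, mp.one_rtr] at h
    linear_combination h
  have G2 : ∀ f f' f'' : F, 0 = R g f g f'' * R 1 f 1 f' + R 1 (mp.rtr g f) g f'' * R g f 1 f' := by
    intro f f' f''
    have h := hR.cqt1 g 1 g f f' f''
    rw [hsum] at h
    simp only [hltl, ginv, hgg, inv_one, mul_one, one_mul, if_neg hne1g, cd.tau_one, cd.one_tau,
      Units.val_one, mp.one_rtr, zero_mul] at h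
    linear_combination h
  have G3 : ∀ f f' f'' : F, 0 = R g f g f'' * R 1 f' 1 f'' + R g f 1 (mp.rtr g f'') * R 1 f' g f'' := by
    intro f f' f''
    have h := hR.cqt2 g 1 g f f' f''
    rw [hsum] at h
    simp only [hltl, ginv, hgg, inv_one, mul_one, one_mul, if_neg hg, cd.tau_one, cd.one_tau,
      Units.val_one, mp.one_rtr, zero_mul] at h
    linear_combination h
  obtain ⟨t, ht⟩ := hT
  -- translating an S-element by t⁻¹ lands in T
  have hT2 : ∀ f : F, mp.rtr g f = f → mp.rtr g (t⁻¹ * f) ≠ t⁻¹ * f := by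
    intro f hf hc
    rw [hrmul, hrinv, hf] at hc
    exact ht (inv_injective (mul_right_cancel hc))
  have hts : ∀ f : F, t * (t⁻¹ * f) = f := fun f => mul_inv_cancel_left t f
  refine ⟨?_, ?_, ?_⟩
  · intro f f' hf hf'
    -- w(t, f') = 0 and related T-facts
    have hwtf' : R g t g f' = 0 := by
      apply wA
      rw [hf']
      intro hh
      exact ht (mul_left_cancel (hh.trans (mul_comm t f')))
    have hwft : R g f g t = 0 := by
      apply wA
      rw [hf]
      intro hh
      exact ht (mul_right_cancel (hh.trans (mul_comm f t)))
    have hv : R g f 1 f' = 0 := by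
      have h := C3 t (t⁻¹ * f) f'
      rw [hts, hf'] at h
      have hz1 : R g t 1 f' = 0 := v0 t f' ht
      have h0 : ((cd.sig g t (t⁻¹ * f) : kˣ) : k) * R g f 1 f' = 0 := by
        linear_combination h + R g (t⁻¹ * f) 1 f' * hz1
          + ((cd.tau g g f' : kˣ) : k) * R g (t⁻¹ * f) g f' * hwtf'
      exact (mul_eq_zero.mp h0).resolve_left (Units.ne_zero _)
    have hu : R 1 f g f' = 0 := by
      have h := D2 f t (t⁻¹ * f')
      rw [hts] at h
      have hz1 : R 1 f g t = 0 := u0 f t ht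
      have h0 : ((cd.sig g t (t⁻¹ * f') : kˣ) : k) * R 1 f g f' = 0 := by
        linear_combination h + R 1 f g (t⁻¹ * f') * hz1
          + ((cd.tau g g f : kˣ) : k) * R g (mp.rtr g f) g (t⁻¹ * f') * hwft
      exact (mul_eq_zero.mp h0).resolve_left (Units.ne_zero _)
    have hw : R g f g f' = 0 := by
      have h := C4 t (t⁻¹ * f) f'
      rw [hts] at h
      have hz1 : R g (t⁻¹ * f) 1 f' = 0 := v0 _ _ (hT2 f hf)
      have hz2 : R g t 1 (mp.rtr g f') = 0 := v0 t _ ht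
      have h0 : ((cd.sig g t (t⁻¹ * f) : kˣ) : k) * R g f g f' = 0 := by
        linear_combination h + R g t g f' * hz1 + R g (t⁻¹ * f) g f' * hz2
      exact (mul_eq_zero.mp h0).resolve_left (Units.ne_zero _)
    exact ⟨hv, hu, hw⟩
  · intro f f' f'' hf _
    have h := G2 f f' f''
    have hz : R g f 1 f' = 0 := v0 f f' hf
    linear_combination -h - R 1 (mp.rtr g f) g f'' * hz
  · intro f f' f'' hf' _
    have h := G3 f'' f f'
    have hz : R 1 f g f' = 0 := u0 f f' hf'
    linear_combination -h - R g f'' 1 (mp.rtr g f') * hz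
end
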